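/- arXiv:2208.04454 — 3 statements merged into one kernel-verified Lean document; each statement's English description precedes it below -/
import Mathlib

section
/- Let Q = [u₁,...,uₙ] be a spherical polygon with vertices in general position, and let i, j be indices with j ∉ {i−1, i, i+1} (mod n), so that the edges [u_i, u_{i+1}] and [u_j, u_{j+1}] are non-adjacent. Then these two edges have a common point if and only if the following sign relations hold: sign[u_i,u_{i+1},u_j] = sign[u_{i+1},u_j,u_{j+1}], sign[u_i,u_{i+1},u_{j+1}] = sign[u_i,u_j,u_{j+1}], and sign[u_i,u_{i+1},u_j] = −sign[u_i,u_{i+1},u_{j+1}]. -/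
open scoped RealInnerProductSpace

noncomputable section

/-- ℝ³ as EuclideanSpace. -/
abbrev E3 : Type := EuclideanSpace ℝ (Fin 3)

/-- Determinant of the 3×3 matrix with columns u, v, w. -/
def det3 (u v w : E3) : ℝ :=
  Matrix.det !![u 0, v 0, w 0; u 1, v 1, w 1; u 2, v 2, w 2]

/-- The minimizing great-circle arc joining two non-antipodal points of S². -/
def sphericalEdge (u v : E3) : Set E3 :=
  {p | ∃ a b : ℝ, 0 ≤ a ∧ 0 ≤ b ∧ (a ≠ 0 ∨ b ≠ 0) ∧
    p = ‖a • u + b • v‖⁻¹ • (a • u + b • v)}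

/-- A spherical polygon: a cyclic sequence of distinct points of S² with consecutive
vertices non-antipodal. -/
def IsSphericalPolygon {n : ℕ} (u : ZMod n → E3) : Prop :=
  (∀ i, ‖u i‖ = 1) ∧ Function.Injective u ∧ (∀ i, u (i + 1) ≠ -(u i))

/-- The i-th edge of a spherical polygon. -/
def polyEdge {n : ℕ} (u : ZMod n → E3) (i : ZMod n) : Set E3 :=
  sphericalEdge (u i) (u (i + 1))

/-- A spherical polygon is simple if non-adjacent edges are disjoint and adjacent
edges meet only in their common vertex. -/
def IsSimple {n : ℕ} (u : ZMod n → E3) : Prop :=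
  (∀ i j : ZMod n, j ≠ i → j ≠ i + 1 → i ≠ j + 1 →
      Disjoint (polyEdge u i) (polyEdge u j)) ∧
  (∀ i : ZMod n, polyEdge u i ∩ polyEdge u (i + 1) = {u (i + 1)})

/-- A family of points of S² is balanced if it is not contained in any closed
hemisphere. -/
def IsBalanced {ι : Type*} (u : ι → E3) : Prop :=
  ∀ w : E3, w ≠ 0 → ∃ i, ⟪u i, w⟫ < 0

/-- Points in general position: no three on a common great circle. -/
def GeneralPosition {ι : Type*} (u : ι → E3) : Prop :=
  ∀ i j k : ι, i ≠ j → i ≠ k → j ≠ k → det3 (u i) (u j) (u k) ≠ 0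

/-- Spherical inflection of a spherical polygon at index i. -/
def Inflection {n : ℕ} (u : ZMod n → E3) (i : ZMod n) : Prop :=
  det3 (u (i - 1)) (u i) (u (i + 1)) * det3 (u i) (u (i + 1)) (u (i + 2)) < 0

/-- The polygon Q − uᵢ obtained by deleting the vertex uᵢ, reindexed over ZMod (n-1),
starting at u_{i+1}. -/
def eraseVertex {n : ℕ} (u : ZMod n → E3) (i : ZMod n) : ZMod (n - 1) → E3 :=
  fun j => u (i + 1 + (j.val : ZMod n))

/-- The open cone spanned by three vectors. -/
def openCone3 (a b c : E3) : Set E3 :=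
  {x | ∃ l₁ l₂ l₃ : ℝ, 0 < l₁ ∧ 0 < l₂ ∧ 0 < l₃ ∧ x = l₁ • a + l₂ • b + l₃ • c}

end


lemma det3_eq (u v w : E3) : det3 u v w =
    u 0 * v 1 * w 2 - u 0 * v 2 * w 1 - u 1 * v 0 * w 2 + u 1 * v 2 * w 0
      + u 2 * v 0 * w 1 - u 2 * v 1 * w 0 := by
  simp [det3, Matrix.det_fin_three]; ring

lemma det3_add₃ (a b w x : E3) : det3 a b (w + x) = det3 a b w + det3 a b x := by
  simp only [det3_eq, PiLp.add_apply]; ring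

lemma det3_smul₃ (a b w : E3) (r : ℝ) : det3 a b (r • w) = r * det3 a b w := by
  simp only [det3_eq, PiLp.smul_apply, smul_eq_mul]; ring

lemma det3_self₁₃ (a b : E3) : det3 a b a = 0 := by simp only [det3_eq]; ring
lemma det3_self₂₃ (a b : E3) : det3 a b b = 0 := by simp only [det3_eq]; ring
lemma det3_rot (a b c : E3) : det3 a b c = det3 c a b := by simp only [det3_eq]; ring
lemma det3_swap23 (a b c : E3) : det3 a b c = -det3 a c b := by simp only [det3_eq]; ring

lemma cramer3 (a b c d : E3) :
    det3 a b c • d = det3 d b c • a + det3 a d c • b + det3 a b d • c := by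
  ext k
  have hk : k = 0 ∨ k = 1 ∨ k = 2 := by omega
  rcases hk with rfl | rfl | rfl <;>
  · simp only [PiLp.add_apply, PiLp.smul_apply, smul_eq_mul, det3_eq]
    ring

lemma sign_eq_sign_iff {x y : ℝ} (hx : x ≠ 0) (hy : y ≠ 0) :
    Real.sign x = Real.sign y ↔ 0 < x * y := by
  rcases hx.lt_or_gt with h | h <;> rcases hy.lt_or_gt with h' | h'
  · rw [Real.sign_of_neg h, Real.sign_of_neg h']
    exact iff_of_true rfl (mul_pos_of_neg_of_neg h h')
  · rw [Real.sign_of_neg h, Real.sign_of_pos h']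
    exact iff_of_false (by norm_num) (by nlinarith)
  · rw [Real.sign_of_pos h, Real.sign_of_neg h']
    exact iff_of_false (by norm_num) (by nlinarith)
  · rw [Real.sign_of_pos h, Real.sign_of_pos h']
    exact iff_of_true rfl (mul_pos h h')

lemma sign_eq_neg_sign_iff {x y : ℝ} (hx : x ≠ 0) (hy : y ≠ 0) :
    Real.sign x = -Real.sign y ↔ x * y < 0 := by
  rcases hx.lt_or_gt with h | h <;> rcases hy.lt_or_gt with h' | h'
  · rw [Real.sign_of_neg h, Real.sign_of_neg h']
    exact iff_of_false (by norm_num) (by nlinarith)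
  · rw [Real.sign_of_neg h, Real.sign_of_pos h']
    exact iff_of_true (by norm_num) (mul_neg_of_neg_of_pos h h')
  · rw [Real.sign_of_pos h, Real.sign_of_neg h']
    exact iff_of_true (by norm_num) (mul_neg_of_pos_of_neg h h')
  · rw [Real.sign_of_pos h, Real.sign_of_pos h']
    exact iff_of_false (by norm_num) (by nlinarith)

lemma key_scalar {p q x y : ℝ} (hp : 0 ≤ p) (hq : 0 ≤ q) (hpq : p ≠ 0 ∨ q ≠ 0)
    (hx : x ≠ 0) (hy : y ≠ 0) (h : p * x + q * y = 0) :
    0 < p ∧ 0 < q ∧ x * y < 0 := by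
  have hp0 : p ≠ 0 := by
    rintro rfl
    have hq0 : q ≠ 0 := hpq.resolve_left (by simp)
    have hqy : q * y = 0 := by linarith
    exact hy ((mul_eq_zero.mp hqy).resolve_left hq0)
  have hq0 : q ≠ 0 := by
    rintro rfl
    have hpx : p * x = 0 := by linarith
    exact hx ((mul_eq_zero.mp hpx).resolve_left hp0)
  have hpp : 0 < p := hp.lt_of_ne (Ne.symm hp0)
  have hqq : 0 < q := hq.lt_of_ne (Ne.symm hq0)
  refine ⟨hpp, hqq, ?_⟩
  have hpq' : 0 < p * q := mul_pos hpp hqq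
  have h2 : 0 < (q * y) ^ 2 :=
    lt_of_le_of_ne (sq_nonneg _) (Ne.symm (pow_ne_zero 2 (mul_ne_zero hq0 hy)))
  have hxy : x * y = -((q * y) ^ 2) / (p * q) := by
    rw [eq_div_iff hpq'.ne']
    linear_combination (q * y) * h
  rw [hxy]
  exact div_neg_of_neg_of_pos (by linarith) hpq'

lemma key_scalar2 {p q x y : ℝ} (hp : 0 < p) (hq : 0 < q)
    (hx : x ≠ 0) (hy : y ≠ 0) (h : p * x = q * y) : 0 < x * y := by
  have hpq : 0 < p * q := mul_pos hp hq
  have h2 : 0 < (q * y) ^ 2 :=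
    lt_of_le_of_ne (sq_nonneg _) (Ne.symm (pow_ne_zero 2 (mul_ne_zero hq.ne' hy)))
  have hxy : x * y = (q * y) ^ 2 / (p * q) := by
    rw [eq_div_iff hpq.ne']
    linear_combination (q * y) * h
  rw [hxy]
  exact div_pos h2 hpq

lemma pos_comb_ne_zero {A B : E3} (hA : ‖A‖ = 1) (hB : ‖B‖ = 1) (hBA : B ≠ -A)
    {a b : ℝ} (ha : 0 ≤ a) (hb : 0 ≤ b) (hab : a ≠ 0 ∨ b ≠ 0) :
    a • A + b • B ≠ 0 := by
  intro h
  by_cases hb0 : b = 0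
  · subst hb0
    have ha0 : a ≠ 0 := hab.resolve_right (by simp)
    rw [zero_smul, add_zero] at h
    rcases smul_eq_zero.mp h with h' | h'
    · exact ha0 h'
    · rw [h'] at hA; simp at hA
  · have hb' : 0 < b := hb.lt_of_ne (Ne.symm hb0)
    have h1 : b • B = (-a) • A := by
      rw [neg_smul]
      rw [add_comm] at h
      exact eq_neg_of_add_eq_zero_left h
    have hBe : B = (-(a / b)) • A := by
      calc B = b⁻¹ • (b • B) := by rw [smul_smul, inv_mul_cancel₀ hb'.ne', one_smul]
        _ = b⁻¹ • ((-a) • A) := by rw [h1]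
        _ = (-(a / b)) • A := by rw [smul_smul]; congr 1; field_simp
    have hnB : (1 : ℝ) = a / b := by
      have := hB
      rw [hBe, norm_smul, hA, mul_one, Real.norm_eq_abs, abs_neg,
        abs_of_nonneg (div_nonneg ha hb)] at this
      exact this.symm
    have hab' : a = b := by field_simp at hnB; linarith
    apply hBA
    rw [hBe, hab', div_self hb'.ne', neg_smul, one_smul]

/-- Two non-adjacent edges of a spherical polygon with vertices in
general position intersect if and only if the stated sign relations between the
determinants hold. -/
theorem stmt_9 {n : ℕ} (u : ZMod n → E3)
    (hpoly : IsSphericalPolygon u)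
    (hgp : GeneralPosition u)
    (i j : ZMod n) (hj₁ : j ≠ i - 1) (hj₂ : j ≠ i) (hj₃ : j ≠ i + 1) :
    (polyEdge u i ∩ polyEdge u j).Nonempty ↔
      (Real.sign (det3 (u i) (u (i + 1)) (u j)) =
         Real.sign (det3 (u (i + 1)) (u j) (u (j + 1))) ∧
       Real.sign (det3 (u i) (u (i + 1)) (u (j + 1))) =
         Real.sign (det3 (u i) (u j) (u (j + 1))) ∧
       Real.sign (det3 (u i) (u (i + 1)) (u j)) =
         - Real.sign (det3 (u i) (u (i + 1)) (u (j + 1)))) := by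
  obtain ⟨hnorm, huinj, hant⟩ := hpoly
  have hone : (1 : ZMod n) ≠ 0 := by
    intro h
    have h1 : ((1 : ℕ) : ZMod n) = 0 := by exact_mod_cast h
    have hdvd : n ∣ 1 := (CharP.cast_eq_zero_iff (ZMod n) n 1).mp h1
    have hn1 : n = 1 := Nat.dvd_one.mp hdvd
    subst hn1
    exact hj₂ (Subsingleton.elim j i)
  have hii1 : i ≠ i + 1 := fun h => hone (left_eq_add.mp h)
  have hjj1 : j ≠ j + 1 := fun h => hone (left_eq_add.mp h)
  have hij : i ≠ j := Ne.symm hj₂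
  have hi1j : i + 1 ≠ j := Ne.symm hj₃
  have hij1 : i ≠ j + 1 := fun h => hj₁ (by rw [h]; ring)
  have hi1j1 : i + 1 ≠ j + 1 := fun h => hij (add_right_cancel h)
  set A := u i with hAdef
  set B := u (i + 1) with hBdef
  set C := u j with hCdef
  set D := u (j + 1) with hDdef
  have hd1 : det3 A B C ≠ 0 := hgp i (i + 1) j hii1 hij hi1j
  have hd2 : det3 A B D ≠ 0 := hgp i (i + 1) (j + 1) hii1 hij1 hi1j1
  have hd3 : det3 A C D ≠ 0 := hgp i j (j + 1) hij hij1 hjj1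
  have hd4 : det3 B C D ≠ 0 := hgp (i + 1) j (j + 1) hi1j hi1j1 hjj1
  rw [sign_eq_sign_iff hd1 hd4, sign_eq_sign_iff hd2 hd3, sign_eq_neg_sign_iff hd1 hd2]
  constructor
  · rintro ⟨x, hx1, hx2⟩
    obtain ⟨a, b, ha, hb, hab, hxab⟩ := hx1
    obtain ⟨c, d, hc, hd, hcd, hxcd⟩ := hx2
    have hv1 : a • A + b • B ≠ 0 :=
      pos_comb_ne_zero (hnorm i) (hnorm (i + 1)) (hant i) ha hb hab
    have hv2 : c • C + d • D ≠ 0 :=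
      pos_comb_ne_zero (hnorm j) (hnorm (j + 1)) (hant j) hc hd hcd
    have hr : (0 : ℝ) < ‖a • A + b • B‖ := norm_pos_iff.mpr hv1
    have hs : (0 : ℝ) < ‖c • C + d • D‖ := norm_pos_iff.mpr hv2
    set r := ‖a • A + b • B‖ with hrdef
    set s := ‖c • C + d • D‖ with hsdef
    have h1 : a • A + b • B = r • x := by
      rw [hxab, smul_smul, mul_inv_cancel₀ hr.ne', one_smul]
    have h2 : c • C + d • D = s • x := by
      rw [hxcd, smul_smul, mul_inv_cancel₀ hs.ne', one_smul]
    have veq : (s * a) • A + (s * b) • B = (r * c) • C + (r * d) • D := by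
      have hv : s • (a • A + b • B) = r • (c • C + d • D) := by
        rw [h1, h2, smul_smul, smul_smul, mul_comm]
      simpa [smul_add, smul_smul] using hv
    have E1 : (r * c) * det3 A B C + (r * d) * det3 A B D = 0 := by
      have h := congrArg (det3 A B) veq
      simp only [det3_add₃, det3_smul₃, det3_self₁₃, det3_self₂₃, mul_zero, add_zero,
        zero_add] at h
      linarith
    have E2 : (s * a) * det3 A C D + (s * b) * det3 B C D = 0 := by
      have h := congrArg (det3 C D) veq
      simp only [det3_add₃, det3_smul₃, det3_self₁₃, det3_self₂₃, mul_zero, add_zero,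
        zero_add] at h
      rwa [det3_rot C D A, det3_rot C D B] at h
    have E3 : (s * a) * det3 A B C = (r * d) * det3 B C D := by
      have h := congrArg (det3 B C) veq
      simp only [det3_add₃, det3_smul₃, det3_self₁₃, det3_self₂₃, mul_zero, add_zero,
        zero_add] at h
      rwa [det3_rot B C A] at h
    obtain ⟨hcpos, hdpos, h12⟩ := key_scalar (mul_nonneg hr.le hc) (mul_nonneg hr.le hd)
      (hcd.imp (fun h' => mul_ne_zero hr.ne' h') (fun h' => mul_ne_zero hr.ne' h'))
      hd1 hd2 E1
    obtain ⟨hapos, hbpos, h34⟩ := key_scalar (mul_nonneg hs.le ha) (mul_nonneg hs.le hb)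
      (hab.imp (fun h' => mul_ne_zero hs.ne' h') (fun h' => mul_ne_zero hs.ne' h'))
      hd3 hd4 E2
    have h14 : 0 < det3 A B C * det3 B C D := key_scalar2 hapos hdpos hd1 hd4 E3
    have h23 : 0 < det3 A B D * det3 A C D := by
      have heq : det3 A B D * det3 A C D =
          ((det3 A B C * det3 A B D) * (det3 A C D * det3 B C D)) /
            (det3 A B C * det3 B C D) := by
        rw [eq_div_iff h14.ne']; ring
      rw [heq]
      exact div_pos (mul_pos_of_neg_of_neg h12 h34) h14
    exact ⟨h14, h23, h12⟩
  · rintro ⟨h14, h23, h12⟩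
    have hd1sq : 0 < det3 A B C ^ 2 :=
      lt_of_le_of_ne (sq_nonneg _) (Ne.symm (pow_ne_zero 2 hd1))
    have hd2sq : 0 < det3 A B D ^ 2 :=
      lt_of_le_of_ne (sq_nonneg _) (Ne.symm (pow_ne_zero 2 hd2))
    set α := det3 B C D / det3 A B C with hαdef
    set β := -(det3 A C D / det3 A B C) with hβdef
    set γ := det3 A B D / det3 A B C with hγdef
    have hα : 0 < α := by
      rw [hαdef]
      have heq : det3 B C D / det3 A B C = (det3 A B C * det3 B C D) / det3 A B C ^ 2 := by
        rw [div_eq_div_iff hd1 (pow_ne_zero 2 hd1)]; ring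
      rw [heq]
      exact div_pos h14 hd1sq
    have hβpos : 0 < β := by
      rw [hβdef]
      have h13 : det3 A B C * det3 A C D < 0 := by
        have heq : det3 A B C * det3 A C D =
            ((det3 A B C * det3 A B D) * (det3 A B D * det3 A C D)) / det3 A B D ^ 2 := by
          rw [eq_div_iff hd2sq.ne']; ring
        rw [heq]
        exact div_neg_of_neg_of_pos (mul_neg_of_neg_of_pos h12 h23) hd2sq
      have heq : -(det3 A C D / det3 A B C) =
          (-(det3 A B C * det3 A C D)) / det3 A B C ^ 2 := by
        rw [eq_div_iff (pow_ne_zero 2 hd1)]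
        field_simp
      rw [heq]
      exact div_pos (by linarith) hd1sq
    have hγneg : γ < 0 := by
      rw [hγdef]
      have heq : det3 A B D / det3 A B C = (det3 A B C * det3 A B D) / det3 A B C ^ 2 := by
        rw [div_eq_div_iff hd1 (pow_ne_zero 2 hd1)]; ring
      rw [heq]
      exact div_neg_of_neg_of_pos h12 hd1sq
    have hDid : D = α • A + β • B + γ • C := by
      have hc3 := cramer3 A B C D
      rw [(det3_rot D B C).trans (det3_rot C D B), det3_swap23 A D C] at hc3
      apply smul_right_injective E3 hd1
      show det3 A B C • D = det3 A B C • _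
      rw [hc3]
      match_scalars <;> simp only [hαdef, hβdef, hγdef] <;> field_simp <;> try ring
    refine ⟨‖α • A + β • B‖⁻¹ • (α • A + β • B),
      ⟨α, β, hα.le, hβpos.le, Or.inl hα.ne', rfl⟩,
      ⟨-γ, 1, by linarith, zero_le_one, Or.inr one_ne_zero, ?_⟩⟩
    have hw : (-γ) • C + (1 : ℝ) • D = α • A + β • B := by
      rw [one_smul, hDid]
      module
    rw [hw]
end

section
/- Let Q = [u₁,...,uₙ] (n ≥ 5) be a simple spherical polygon whose vertices are in general position and balanced, and let u_i be a vertex of Q that is both good and nonessential. Then the number of spherical inflections of Q is greater than or equal to the number of spherical inflections of the spherical polygon Q − u_i. -/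
open scoped RealInnerProductSpace

noncomputable section H3

lemma det3_expand (u v w : E3) : det3 u v w =
    u 0 * (v 1 * w 2 - v 2 * w 1) - v 0 * (u 1 * w 2 - u 2 * w 1)
      + w 0 * (u 1 * v 2 - u 2 * v 1) := by
  simp [det3, Matrix.det_fin_three]; ring

lemma det3_cyclic (u v w : E3) : det3 u v w = det3 v w u := by
  simp [det3_expand]; ring

lemma det3_swap12 (u v w : E3) : det3 u v w = -det3 v u w := by
  simp [det3_expand]; ring

@[simp] lemma smul_apply' (a : ℝ) (x : E3) (j : Fin 3) : (a • x) j = a * x j := rfl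
@[simp] lemma add_apply' (x y : E3) (j : Fin 3) : (x + y) j = x j + y j := rfl

lemma det3_comb₁ (a b : ℝ) (x y v w : E3) :
    det3 (a • x + b • y) v w = a * det3 x v w + b * det3 y v w := by
  simp [det3_expand]; ring

lemma det3_comb₂ (a b : ℝ) (x y v w : E3) :
    det3 v (a • x + b • y) w = a * det3 v x w + b * det3 v y w := by
  simp [det3_expand]; ring

lemma det3_comb₃ (a b : ℝ) (x y v w : E3) :
    det3 v w (a • x + b • y) = a * det3 v w x + b * det3 v w y := by
  simp [det3_expand]; ring

lemma cramer3_s12 (q r s x : E3) :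
    det3 q r s • x = det3 x r s • q + det3 q x s • r + det3 q r x • s := by
  ext j
  fin_cases j <;> · simp [det3_expand]; ring

lemma sphericalEdge_comm (u v : E3) : sphericalEdge u v = sphericalEdge v u := by
  ext p
  constructor <;> rintro ⟨a, b, ha, hb, hab, rfl⟩ <;>
    exact ⟨b, a, hb, ha, hab.symm, by rw [add_comm]⟩

lemma mem_sphericalEdge (u v : E3) {a b : ℝ} (ha : 0 ≤ a) (hb : 0 ≤ b)
    (hab : a ≠ 0 ∨ b ≠ 0) : ‖a • u + b • v‖⁻¹ • (a • u + b • v) ∈ sphericalEdge u v :=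
  ⟨a, b, ha, hb, hab, rfl⟩

/-- If z lies on the face of the cone (q,r,s) with zero q-coordinate, then its
normalization is on the edge [r,s]. -/
lemma face1 {q r s z : E3} (hd : det3 q r s ≠ 0) (hz : z ≠ 0)
    (h1 : det3 z r s = 0) (h2 : 0 ≤ det3 q z s * det3 q r s)
    (h3 : 0 ≤ det3 q r z * det3 q r s) :
    ‖z‖⁻¹ • z ∈ sphericalEdge r s := by
  set d := det3 q r s with hdd
  have hc := cramer3_s12 q r s z
  rw [h1, zero_smul, zero_add] at hc
  -- d • z = A • r + B • s
  set A := det3 q z s with hA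
  set B := det3 q r z with hB
  have hzrep : z = (A / d) • r + (B / d) • s := by
    have : d⁻¹ • (d • z) = d⁻¹ • (A • r + B • s) := by rw [hc]
    rw [smul_smul, inv_mul_cancel₀ hd, one_smul] at this
    rw [this, smul_add, smul_smul, smul_smul, inv_mul_eq_div, inv_mul_eq_div]
  have hAd : 0 ≤ A / d := by
    rcases hd.lt_or_gt with h | h
    · rw [div_nonneg_iff]; right
      constructor
      · nlinarith
      · exact h.le
    · rw [div_nonneg_iff]; left
      constructor
      · nlinarith
      · exact h.le
  have hBd : 0 ≤ B / d := by
    rcases hd.lt_or_gt with h | h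
    · rw [div_nonneg_iff]; right; exact ⟨by nlinarith, h.le⟩
    · rw [div_nonneg_iff]; left; exact ⟨by nlinarith, h.le⟩
  have hne : A / d ≠ 0 ∨ B / d ≠ 0 := by
    by_contra hcon
    push_neg at hcon
    apply hz
    rw [hzrep, hcon.1, hcon.2, zero_smul, zero_smul, add_zero]
  have := mem_sphericalEdge r s hAd hBd hne
  rwa [← hzrep] at this

lemma face2 {q r s z : E3} (hd : det3 q r s ≠ 0) (hz : z ≠ 0)
    (h2 : det3 q z s = 0) (h1 : 0 ≤ det3 z r s * det3 q r s)
    (h3 : 0 ≤ det3 q r z * det3 q r s) :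
    ‖z‖⁻¹ • z ∈ sphericalEdge q s := by
  have e0 : det3 r s q = det3 q r s := by simp [det3_expand]; ring
  have e1 : det3 z s q = det3 q z s := by simp [det3_expand]; ring
  have e2 : det3 r z q = det3 q r z := by simp [det3_expand]; ring
  have e3 : det3 r s z = det3 z r s := by simp [det3_expand]; ring
  have := face1 (q := r) (r := s) (s := q) (z := z) (by rw [e0]; exact hd) hz
    (by rw [e1]; exact h2) (by rw [e2, e0]; exact h3) (by rw [e3, e0]; exact h1)
  rwa [sphericalEdge_comm] at this

lemma face3 {q r s z : E3} (hd : det3 q r s ≠ 0) (hz : z ≠ 0)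
    (h3 : det3 q r z = 0) (h1 : 0 ≤ det3 z r s * det3 q r s)
    (h2 : 0 ≤ det3 q z s * det3 q r s) :
    ‖z‖⁻¹ • z ∈ sphericalEdge q r := by
  have e0 : det3 s q r = det3 q r s := by simp [det3_expand]; ring
  have e1 : det3 z q r = det3 q r z := by simp [det3_expand]; ring
  have e2 : det3 s z r = det3 z r s := by simp [det3_expand]; ring
  have e3 : det3 s q z = det3 q z s := by simp [det3_expand]; ring
  exact face1 (q := s) (r := q) (s := r) (z := z) (by rw [e0]; exact hd) hz
    (by rw [e1]; exact h3) (by rw [e2, e0]; exact h1) (by rw [e3, e0]; exact h2)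



lemma chain_step {q r s x y : E3} (hd : det3 q r s ≠ 0)
    (hux : ‖x‖ = 1) (huy : ‖y‖ = 1) (hax : y ≠ -x)
    (hqr : Disjoint (sphericalEdge x y) (sphericalEdge q r))
    (hrs : Disjoint (sphericalEdge x y) (sphericalEdge r s))
    (hqs : Disjoint (sphericalEdge x y) (sphericalEdge q s))
    (hx1 : 0 < det3 x r s * det3 q r s) (hx2 : 0 < det3 q x s * det3 q r s)
    (hx3 : 0 < det3 q r x * det3 q r s)
    (hy1 : det3 y r s * det3 q r s ≠ 0) (hy2 : det3 q y s * det3 q r s ≠ 0)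
    (hy3 : det3 q r y * det3 q r s ≠ 0) :
    0 < det3 y r s * det3 q r s ∧ 0 < det3 q y s * det3 q r s ∧
      0 < det3 q r y * det3 q r s := by
  set d := det3 q r s with hdd
  set X1 := det3 x r s * d with hX1
  set X2 := det3 q x s * d with hX2
  set X3 := det3 q r x * d with hX3
  set Y1 := det3 y r s * d with hY1
  set Y2 := det3 q y s * d with hY2
  set Y3 := det3 q r y * d with hY3
  by_contra hcon
  have hneg : Y1 < 0 ∨ Y2 < 0 ∨ Y3 < 0 := by
    rcases hy1.lt_or_gt with h1 | h1
    · exact Or.inl h1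
    rcases hy2.lt_or_gt with h2 | h2
    · exact Or.inr (Or.inl h2)
    rcases hy3.lt_or_gt with h3 | h3
    · exact Or.inr (Or.inr h3)
    exact absurd ⟨h1, h2, h3⟩ hcon
  set v1 := -Y1 / X1 with hv1
  set v2 := -Y2 / X2 with hv2
  set v3 := -Y3 / X3 with hv3
  set a := max (max v1 v2) v3 with ha
  have hv1a : v1 ≤ a := le_trans (le_max_left v1 v2) (le_max_left _ v3)
  have hv2a : v2 ≤ a := le_trans (le_max_right v1 v2) (le_max_left _ v3)
  have hv3a : v3 ≤ a := le_max_right _ v3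
  have hapos : 0 < a := by
    rcases hneg with h | h | h
    · exact lt_of_lt_of_le (div_pos (by linarith) hx1) hv1a
    · exact lt_of_lt_of_le (div_pos (by linarith) hx2) hv2a
    · exact lt_of_lt_of_le (div_pos (by linarith) hx3) hv3a
  set z := a • x + y with hz
  have hZ1 : det3 z r s * d = a * X1 + Y1 := by
    rw [hz, show a • x + y = a • x + (1:ℝ) • y from by rw [one_smul], det3_comb₁]
    rw [hX1, hY1]; ring
  have hZ2 : det3 q z s * d = a * X2 + Y2 := by
    rw [hz, show a • x + y = a • x + (1:ℝ) • y from by rw [one_smul], det3_comb₂]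
    rw [hX2, hY2]; ring
  have hZ3 : det3 q r z * d = a * X3 + Y3 := by
    rw [hz, show a • x + y = a • x + (1:ℝ) • y from by rw [one_smul], det3_comb₃]
    rw [hX3, hY3]; ring
  have hZ1nn : 0 ≤ a * X1 + Y1 := by
    have := (div_le_iff₀ hx1).mp hv1a; linarith
  have hZ2nn : 0 ≤ a * X2 + Y2 := by
    have := (div_le_iff₀ hx2).mp hv2a; linarith
  have hZ3nn : 0 ≤ a * X3 + Y3 := by
    have := (div_le_iff₀ hx3).mp hv3a; linarith
  have hzne : z ≠ 0 := by
    intro h0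
    have hy : y = -(a • x) := by
      have := eq_neg_of_add_eq_zero_right h0
      rw [this]
    have hna : ‖y‖ = a := by
      rw [hy, norm_neg, norm_smul, hux, Real.norm_eq_abs, abs_of_pos hapos, mul_one]
    rw [huy] at hna
    apply hax
    rw [hy, ← hna, one_smul]
  have hmemxy : ‖z‖⁻¹ • z ∈ sphericalEdge x y := by
    have := mem_sphericalEdge x y (a := a) (b := 1) hapos.le zero_le_one (Or.inr one_ne_zero)
    rwa [one_smul, ← hz] at this
  -- find the coordinate where the max is attained
  have hattain : a * X1 + Y1 = 0 ∨ a * X2 + Y2 = 0 ∨ a * X3 + Y3 = 0 := by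
    rcases max_choice (max v1 v2) v3 with h | h
    · rcases max_choice v1 v2 with h' | h'
      · left
        have hav : a = v1 := by rw [ha, h, h']
        rw [hav, hv1]; field_simp; ring
      · right; left
        have hav : a = v2 := by rw [ha, h, h']
        rw [hav, hv2]; field_simp; ring
    · right; right
      have hav : a = v3 := by rw [ha, h]
      rw [hav, hv3]; field_simp; ring
  rcases hattain with h0 | h0 | h0
  · have hfz : det3 z r s = 0 := by
      have h := hZ1; rw [h0] at h
      exact (mul_eq_zero.mp h).resolve_right hd
    have hmem := face1 hd hzne hfz
      (by show 0 ≤ det3 q z s * d; rw [hZ2]; exact hZ2nn)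
      (by show 0 ≤ det3 q r z * d; rw [hZ3]; exact hZ3nn)
    exact Set.disjoint_left.mp hrs hmemxy hmem
  · have hfz : det3 q z s = 0 := by
      have h := hZ2; rw [h0] at h
      exact (mul_eq_zero.mp h).resolve_right hd
    have hmem := face2 hd hzne hfz
      (by show 0 ≤ det3 z r s * d; rw [hZ1]; exact hZ1nn)
      (by show 0 ≤ det3 q r z * d; rw [hZ3]; exact hZ3nn)
    exact Set.disjoint_left.mp hqs hmemxy hmem
  · have hfz : det3 q r z = 0 := by
      have h := hZ3; rw [h0] at h
      exact (mul_eq_zero.mp h).resolve_right hd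
    have hmem := face3 hd hzne hfz
      (by show 0 ≤ det3 z r s * d; rw [hZ1]; exact hZ1nn)
      (by show 0 ≤ det3 q z s * d; rw [hZ2]; exact hZ2nn)
    exact Set.disjoint_left.mp hqr hmemxy hmem

end H3
noncomputable section H4

lemma natCast_zmod_ne_zero {N c : ℕ} (h0 : 0 < c) (hc : c < N) : (c : ZMod N) ≠ 0 := by
  intro h
  rw [ZMod.natCast_eq_zero_iff] at h
  exact absurd (Nat.le_of_dvd h0 h) (by omega)

lemma index_ne {N : ℕ} (x y : ZMod N) {c : ℕ} (h0 : 0 < c) (hc : c < N)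
    (hrel : y = x + (c : ZMod N)) : x ≠ y := by
  intro h
  rw [← h, left_eq_add] at hrel
  exact natCast_zmod_ne_zero h0 hc hrel

lemma index_ne' {N : ℕ} (x y : ZMod N) {c : ℕ} (h0 : 0 < c) (hc : c < N)
    (hrel : x = y + (c : ZMod N)) : x ≠ y :=
  (index_ne y x h0 hc hrel).symm

lemma natCast_ne_natCast {N a b : ℕ} (ha : a < N) (hb : b < N) (h : a ≠ b) :
    (a : ZMod N) ≠ (b : ZMod N) := by
  intro hh
  apply h
  have := congrArg ZMod.val hh
  rwa [ZMod.val_cast_of_lt ha, ZMod.val_cast_of_lt hb] at this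

lemma natCast_sub_eq_neg {n k : ℕ} (hk : k ≤ n) : ((n - k : ℕ) : ZMod n) = -(k : ZMod n) := by
  have : ((n - k : ℕ) : ZMod n) + (k : ZMod n) = 0 := by
    rw [← Nat.cast_add, show n - k + k = n from by omega, ZMod.natCast_self]
  linear_combination this
  
end H4
noncomputable section H2x

lemma det3_dup₁₂ (x y : E3) : det3 x x y = 0 := by rw [det3_expand]; ring
lemma det3_dup₁₃ (x y : E3) : det3 x y x = 0 := by rw [det3_expand]; ring
lemma det3_dup₂₃ (x y : E3) : det3 x y y = 0 := by rw [det3_expand]; ring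
lemma natCast_succ_zmod {N : ℕ} (a : ℕ) : ((a : ℕ) : ZMod N) + 1 = ((a + 1 : ℕ) : ZMod N) := by push_cast; ring

/-- the vector w with ⟪x,w⟫ = det3 x r s + det3 q x s + det3 q r x -/
def dualVec (q r s : E3) : E3 := WithLp.toLp 2 fun j : Fin 3 =>
  match j with
  | 0 => (r 1 * s 2 - r 2 * s 1) + (s 1 * q 2 - s 2 * q 1) + (q 1 * r 2 - q 2 * r 1)
  | 1 => (r 2 * s 0 - r 0 * s 2) + (s 2 * q 0 - s 0 * q 2) + (q 2 * r 0 - q 0 * r 2)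
  | 2 => (r 0 * s 1 - r 1 * s 0) + (s 0 * q 1 - s 1 * q 0) + (q 0 * r 1 - q 1 * r 0)

lemma inner_dualVec (q r s x : E3) :
    ⟪x, dualVec q r s⟫ = det3 x r s + det3 q x s + det3 q r x := by
  have h : ⟪x, dualVec q r s⟫ = ∑ j : Fin 3, x j * dualVec q r s j := by
    simp [PiLp.inner_apply, mul_comm]
  rw [h, Fin.sum_univ_three]
  show x 0 * dualVec q r s 0 + x 1 * dualVec q r s 1 + x 2 * dualVec q r s 2 = _
  simp only [dualVec, det3_expand]; ring

lemma not_disjoint_of_reps {u v x y z : E3} {a b c d : ℝ}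
    (ha : 0 ≤ a) (hb : 0 ≤ b) (hab : a ≠ 0 ∨ b ≠ 0)
    (hc : 0 ≤ c) (hd : 0 ≤ d) (hcd : c ≠ 0 ∨ d ≠ 0)
    (h1 : z = a • u + b • v) (h2 : z = c • x + d • y)
    (hdisj : Disjoint (sphericalEdge u v) (sphericalEdge x y)) : False := by
  have m1 : ‖z‖⁻¹ • z ∈ sphericalEdge u v := by
    rw [h1]; exact mem_sphericalEdge u v ha hb hab
  have m2 : ‖z‖⁻¹ • z ∈ sphericalEdge x y := by
    rw [h2]; exact mem_sphericalEdge x y hc hd hcd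
  exact Set.disjoint_left.mp hdisj m1 m2

lemma erase_eval {n : ℕ} (u : ZMod n → E3) (i : ZMod n) {c : ℕ} (hc : c < n - 1) :
    eraseVertex u i ((c : ℕ) : ZMod (n-1)) = u (i + 1 + (c : ZMod n)) := by
  unfold eraseVertex
  rw [ZMod.val_cast_of_lt hc]

end H2x
noncomputable section Chain

lemma chain_contra {n : ℕ} (hn : 5 ≤ n) (u : ZMod n → E3)
    (hpoly : IsSphericalPolygon u) (hsimple : IsSimple u) (hgp : GeneralPosition u)
    (hbal : IsBalanced u) (i : ZMod n) (hgood : IsSimple (eraseVertex u i))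
    (m0 : ℕ) (hm1 : 1 ≤ m0) (hm2 : m0 ≤ n - 3)
    (hP1 : 0 < det3 (u (i+1+(m0 : ZMod n))) (u i) (u (i+1)) * det3 (u (i-1)) (u i) (u (i+1)))
    (hP2 : 0 < det3 (u (i-1)) (u (i+1+(m0 : ZMod n))) (u (i+1)) * det3 (u (i-1)) (u i) (u (i+1)))
    (hP3 : 0 < det3 (u (i-1)) (u i) (u (i+1+(m0 : ZMod n))) * det3 (u (i-1)) (u i) (u (i+1))) :
    False := by
  haveI : NeZero n := ⟨by omega⟩
  haveI : NeZero (n-1) := ⟨by omega⟩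
  set q := u (i-1) with hq
  set r := u i with hr
  set s := u (i+1) with hs
  set d := det3 q r s with hd'
  have ne_i_i1 : i ≠ i + 1 := index_ne i (i+1) (c := 1) (by omega) (by omega) (by push_cast; ring)
  have ne_im1_i : i - 1 ≠ i := index_ne (i-1) i (c := 1) (by omega) (by omega) (by push_cast; ring)
  have ne_im1_i1 : i - 1 ≠ i + 1 :=
    index_ne (i-1) (i+1) (c := 2) (by omega) (by omega) (by push_cast; ring)
  have hd : d ≠ 0 := hgp (i-1) i (i+1) ne_im1_i ne_im1_i1 ne_i_i1
  have hvert_ne : ∀ m : ℕ, 1 ≤ m → m ≤ n - 3 →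
      (i + 1 + (m : ZMod n) ≠ i - 1) ∧ (i + 1 + (m : ZMod n) ≠ i) ∧
      (i + 1 + (m : ZMod n) ≠ i + 1) := by
    intro m h1 h2
    refine ⟨index_ne' _ _ (c := m + 2) (by omega) (by omega) (by push_cast; ring),
      index_ne' _ _ (c := m + 1) (by omega) (by omega) (by push_cast; ring),
      index_ne' _ _ (c := m) (by omega) (by omega) (by push_cast; ring)⟩
  have hkne : ∀ m : ℕ, 1 ≤ m → m ≤ n - 3 →
      det3 (u (i+1+(m : ZMod n))) r s * d ≠ 0 ∧
      det3 q (u (i+1+(m : ZMod n))) s * d ≠ 0 ∧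
      det3 q r (u (i+1+(m : ZMod n))) * d ≠ 0 := by
    intro m h1 h2
    obtain ⟨e1, e2, e3⟩ := hvert_ne m h1 h2
    exact ⟨mul_ne_zero (hgp _ i (i+1) e2 e3 ne_i_i1) hd,
      mul_ne_zero (hgp (i-1) _ (i+1) e1.symm ne_im1_i1 e3) hd,
      mul_ne_zero (hgp (i-1) i _ ne_im1_i e1.symm e2.symm) hd⟩
  have ey : ∀ m : ℕ, (i + 1 + (m : ZMod n)) + 1 = i + 1 + ((m+1 : ℕ) : ZMod n) := by
    intro m; push_cast; ring
  have edge_disj : ∀ m : ℕ, 1 ≤ m → m ≤ n - 4 →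
      Disjoint (sphericalEdge (u (i+1+(m : ZMod n))) (u (i+1+((m+1:ℕ) : ZMod n))))
        (sphericalEdge q r) ∧
      Disjoint (sphericalEdge (u (i+1+(m : ZMod n))) (u (i+1+((m+1:ℕ) : ZMod n))))
        (sphericalEdge r s) ∧
      Disjoint (sphericalEdge (u (i+1+(m : ZMod n))) (u (i+1+((m+1:ℕ) : ZMod n))))
        (sphericalEdge q s) := by
    intro m h1 h2
    have hpe : polyEdge u (i+1+(m : ZMod n))
        = sphericalEdge (u (i+1+(m : ZMod n))) (u (i+1+((m+1:ℕ) : ZMod n))) := by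
      unfold polyEdge; rw [ey m]
    have him1 : i - 1 + 1 = i := by ring
    refine ⟨?_, ?_, ?_⟩
    · have hD := hsimple.1 (i+1+(m : ZMod n)) (i-1)
        ((hvert_ne m h1 (by omega)).1.symm)
        (by rw [ey m]; exact (hvert_ne (m+1) (by omega) (by omega)).1.symm)
        (by rw [him1]; exact (hvert_ne m h1 (by omega)).2.1)
      rw [hpe] at hD
      unfold polyEdge at hD
      rw [him1] at hD
      exact hD
    · have hD := hsimple.1 (i+1+(m : ZMod n)) i
        ((hvert_ne m h1 (by omega)).2.1.symm)
        (by rw [ey m]; exact (hvert_ne (m+1) (by omega) (by omega)).2.1.symm)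
        ((hvert_ne m h1 (by omega)).2.2)
      rw [hpe] at hD
      unfold polyEdge at hD
      exact hD
    · -- the gap edge, from goodness
      have e_path : polyEdge (eraseVertex u i) ((m : ℕ) : ZMod (n-1))
          = sphericalEdge (u (i+1+(m : ZMod n))) (u (i+1+((m+1:ℕ) : ZMod n))) := by
        unfold polyEdge
        rw [show ((m : ℕ) : ZMod (n-1)) + 1 = ((m+1 : ℕ) : ZMod (n-1)) from by push_cast; ring,
          erase_eval u i (show m < n-1 from by omega),
          erase_eval u i (show m+1 < n-1 from by omega)]
      have e_gap : polyEdge (eraseVertex u i) ((n-2 : ℕ) : ZMod (n-1))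
          = sphericalEdge q s := by
        unfold polyEdge
        rw [show ((n-2 : ℕ) : ZMod (n-1)) + 1 = ((n-1 : ℕ) : ZMod (n-1)) from by
          rw [natCast_succ_zmod]; congr 1; omega]
        rw [ZMod.natCast_self (n-1),
          show (0 : ZMod (n-1)) = ((0 : ℕ) : ZMod (n-1)) from by norm_num,
          erase_eval u i (show (0:ℕ) < n-1 from by omega),
          erase_eval u i (show n-2 < n-1 from by omega)]
        rw [show i + 1 + ((n-2 : ℕ) : ZMod n) = i - 1 from by
          rw [natCast_sub_eq_neg (show 2 ≤ n from by omega)]; push_cast; ring]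
        rw [show i + 1 + ((0:ℕ) : ZMod n) = i + 1 from by push_cast; ring]
      have hD := hgood.1 ((m : ℕ) : ZMod (n-1)) ((n-2 : ℕ) : ZMod (n-1))
        (natCast_ne_natCast (by omega) (by omega) (by omega))
        (by rw [show ((m : ℕ) : ZMod (n-1)) + 1 = ((m+1 : ℕ) : ZMod (n-1)) from by push_cast; ring]
            exact natCast_ne_natCast (by omega) (by omega) (by omega))
        (by rw [show ((n-2 : ℕ) : ZMod (n-1)) + 1 = ((n-1 : ℕ) : ZMod (n-1)) from by
              rw [natCast_succ_zmod]; congr 1; omega]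
            rw [ZMod.natCast_self (n-1),
              show (0 : ZMod (n-1)) = ((0 : ℕ) : ZMod (n-1)) from by norm_num]
            exact natCast_ne_natCast (by omega) (by omega) (by omega))
      rw [e_path, e_gap] at hD
      exact hD
  let P : ℕ → Prop := fun m =>
    0 < det3 (u (i+1+(m : ZMod n))) r s * d ∧ 0 < det3 q (u (i+1+(m : ZMod n))) s * d ∧
      0 < det3 q r (u (i+1+(m : ZMod n))) * d
  have hPm0 : P m0 := ⟨hP1, hP2, hP3⟩
  have step_up : ∀ m : ℕ, 1 ≤ m → m + 1 ≤ n - 3 → P m → P (m+1) := by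
    intro m h1 h2 hp
    obtain ⟨D1, D2, D3⟩ := edge_disj m h1 (by omega)
    have hax : u (i+1+((m+1:ℕ) : ZMod n)) ≠ -(u (i+1+(m : ZMod n))) := by
      rw [← ey m]; exact hpoly.2.2 _
    exact chain_step hd (hpoly.1 _) (hpoly.1 _) hax D1 D2 D3 hp.1 hp.2.1 hp.2.2
      (hkne (m+1) (by omega) (by omega)).1 (hkne (m+1) (by omega) (by omega)).2.1
      (hkne (m+1) (by omega) (by omega)).2.2
  have step_dn : ∀ m : ℕ, 1 ≤ m → m + 1 ≤ n - 3 → P (m+1) → P m := by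
    intro m h1 h2 hp
    obtain ⟨D1, D2, D3⟩ := edge_disj m h1 (by omega)
    have hax : u (i+1+(m : ZMod n)) ≠ -(u (i+1+((m+1:ℕ) : ZMod n))) := by
      intro h
      apply hpoly.2.2 (i+1+(m : ZMod n))
      rw [ey m, h, neg_neg]
    refine chain_step hd (hpoly.1 _) (hpoly.1 _) hax ?_ ?_ ?_ hp.1 hp.2.1 hp.2.2
      (hkne m h1 (by omega)).1 (hkne m h1 (by omega)).2.1 (hkne m h1 (by omega)).2.2
    · rw [sphericalEdge_comm]; exact D1
    · rw [sphericalEdge_comm]; exact D2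
    · rw [sphericalEdge_comm]; exact D3
  have up : ∀ m : ℕ, m0 ≤ m → m ≤ n - 3 → P m := by
    intro m hm
    induction m, hm using Nat.le_induction with
    | base => intro _; exact hPm0
    | succ k hk ih => intro hk1; exact step_up k (by omega) (by omega) (ih (by omega))
  have dn : ∀ t m : ℕ, m + t = m0 → 1 ≤ m → P m := by
    intro t
    induction t with
    | zero =>
      intro m hm _
      have : m = m0 := by omega
      rw [this]; exact hPm0
    | succ t ih =>
      intro m hm hm1
      exact step_dn m hm1 (by omega) (ih (m+1) (by omega) (by omega))
  have hall : ∀ m : ℕ, 1 ≤ m → m ≤ n - 3 → P m := by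
    intro m h1 h2
    by_cases hc : m0 ≤ m
    · exact up m hc h2
    · exact dn (m0 - m) m (by omega) h1
  -- now derive the contradiction with balancedness
  set w : E3 := d • dualVec q r s with hw'
  have hw : ∀ x : E3, ⟪x, w⟫ = (det3 x r s + det3 q x s + det3 q r x) * d := by
    intro x
    rw [hw', real_inner_smul_right, inner_dualVec]; ring
  have hqw : ⟪q, w⟫ = d * d := by
    rw [hw q, det3_dup₁₂, det3_dup₁₃, ← hd']; ring
  have hw0 : w ≠ 0 := by
    intro h
    rw [h, inner_zero_right] at hqw
    exact (mul_ne_zero hd hd) hqw.symm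
  obtain ⟨k, hk⟩ := hbal w hw0
  set c := (k - (i+1)).val with hc'
  have hkc : k = i + 1 + (c : ZMod n) := by
    rw [hc', ZMod.natCast_val, ZMod.cast_id]; ring
  have hclt : c < n := ZMod.val_lt _
  have hpos : 0 < ⟪u k, w⟫ := by
    rcases Nat.lt_or_ge c 1 with h | h
    · -- c = 0, k = i+1, u k = s
      have : k = i + 1 := by
        rw [hkc, show c = 0 from by omega]; push_cast; ring
      rw [this, ← hs, hw s, det3_dup₁₃, det3_dup₂₃, ← hd']
      have := mul_self_pos.mpr hd
      nlinarith
    rcases Nat.lt_or_ge c (n-3+1) with h2 | h2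
    · -- chain vertex
      obtain ⟨g1, g2, g3⟩ := hall c h (by omega)
      rw [← hkc] at g1 g2 g3
      rw [hw (u k)]
      nlinarith
    rcases Nat.lt_or_ge c (n-1) with h3 | h3
    · -- c = n-2, k = i-1, u k = q
      have : k = i - 1 := by
        rw [hkc, show c = n - 2 from by omega, natCast_sub_eq_neg (show 2 ≤ n from by omega)]
        push_cast; ring
      rw [this, ← hq, hqw]
      exact mul_self_pos.mpr hd
    · -- c = n-1, k = i, u k = r
      have : k = i := by
        rw [hkc, show c = n - 1 from by omega, natCast_sub_eq_neg (show 1 ≤ n from by omega)]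
        push_cast; ring
      rw [this, ← hr, hw r, det3_dup₁₂ r s, det3_dup₂₃ q r, ← hd']
      have := mul_self_pos.mpr hd
      nlinarith
  linarith

end Chain
noncomputable section Fgeo

lemma det3_swap23_s12 (u v w : E3) : det3 u v w = -det3 u w v := by
  rw [det3_expand, det3_expand]; ring

lemma F1_geo {n : ℕ} (hn : 5 ≤ n) (u : ZMod n → E3)
    (hpoly : IsSphericalPolygon u) (hsimple : IsSimple u) (hgp : GeneralPosition u)
    (hbal : IsBalanced u) (i : ZMod n) (hgood : IsSimple (eraseVertex u i))
    (ha : 0 < det3 (u (i-2)) (u (i-1)) (u i) * det3 (u (i-1)) (u i) (u (i+1))) :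
    0 < det3 (u (i-2)) (u (i-1)) (u (i+1)) * det3 (u (i-1)) (u i) (u (i+1)) := by
  haveI : NeZero n := ⟨by omega⟩
  have ne_i_i1 : i ≠ i + 1 := index_ne i (i+1) (c := 1) (by omega) (by omega) (by push_cast; ring)
  have ne_im1_i : i - 1 ≠ i := index_ne (i-1) i (c := 1) (by omega) (by omega) (by push_cast; ring)
  have ne_im1_i1 : i - 1 ≠ i + 1 :=
    index_ne (i-1) (i+1) (c := 2) (by omega) (by omega) (by push_cast; ring)
  have ne_im2_im1 : i - 2 ≠ i - 1 :=
    index_ne (i-2) (i-1) (c := 1) (by omega) (by omega) (by push_cast; ring)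
  have ne_im2_i : i - 2 ≠ i := index_ne (i-2) i (c := 2) (by omega) (by omega) (by push_cast; ring)
  have ne_im2_i1 : i - 2 ≠ i + 1 :=
    index_ne (i-2) (i+1) (c := 3) (by omega) (by omega) (by push_cast; ring)
  set p := u (i-2) with hp
  set q := u (i-1) with hq
  set r := u i with hr
  set s := u (i+1) with hs
  set d := det3 q r s with hd'
  have hd : d ≠ 0 := hgp (i-1) i (i+1) ne_im1_i ne_im1_i1 ne_i_i1
  by_contra hcon
  have hb1ne : det3 p q s * d ≠ 0 :=
    mul_ne_zero (hgp (i-2) (i-1) (i+1) ne_im2_im1 ne_im2_i1 ne_im1_i1) hd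
  have hb1 : det3 p q s * d < 0 := by
    rcases hb1ne.lt_or_gt with h | h
    · exact h
    · exact absurd h hcon
  have hk2 : 0 < det3 q p s * d := by
    rw [det3_swap12 q p s]
    nlinarith
  have hk3 : 0 < det3 q r p * d := by
    rw [show det3 q r p = det3 p q r from by rw [det3_cyclic p q r]]
    exact ha
  have hk1ne : det3 p r s * d ≠ 0 :=
    mul_ne_zero (hgp (i-2) i (i+1) ne_im2_i ne_im2_i1 ne_i_i1) hd
  rcases hk1ne.lt_or_gt with hk1 | hk1
  · -- z on edges [p,q] and [r,s]
    have key : (d*d) • p = (d * det3 p r s) • q + (d * det3 q p s) • r + (d * det3 q r p) • s := by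
      rw [← smul_smul, cramer3_s12 q r s p, smul_add, smul_add, smul_smul, smul_smul, smul_smul]
    have h2 : (d*d) • p + (-(d * det3 p r s)) • q
        = (d * det3 q p s) • r + (d * det3 q r p) • s := by
      rw [key, neg_smul]; abel
    have hdisj : Disjoint (sphericalEdge p q) (sphericalEdge r s) := by
      have hD := hsimple.1 (i-2) i
        (ne_im2_i.symm)
        (by rw [show i - 2 + 1 = i - 1 from by ring]; exact ne_im1_i.symm)
        ne_im2_i1
      unfold polyEdge at hD
      rw [show i - 2 + 1 = i - 1 from by ring] at hD
      exact hD
    exact absurd hdisj (fun hD => not_disjoint_of_reps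
      (z := (d*d) • p + (-(d * det3 p r s)) • q)
      (mul_self_nonneg d) (by nlinarith) (Or.inl (mul_ne_zero hd hd))
      (by nlinarith) (by nlinarith) (Or.inl (by intro h0; rw [mul_comm] at h0; nlinarith))
      rfl h2 hD)
  · -- p in the cone: chain contradiction
    have e : i + 1 + ((n-3 : ℕ) : ZMod n) = i - 2 := by
      rw [natCast_sub_eq_neg (show 3 ≤ n from by omega)]; push_cast; ring
    exact chain_contra hn u hpoly hsimple hgp hbal i hgood (n-3) (by omega) (le_refl _)
      (by rw [e]; exact hk1) (by rw [e]; exact hk2) (by rw [e]; exact hk3)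

lemma F2_geo {n : ℕ} (hn : 5 ≤ n) (u : ZMod n → E3)
    (hpoly : IsSphericalPolygon u) (hsimple : IsSimple u) (hgp : GeneralPosition u)
    (hbal : IsBalanced u) (i : ZMod n) (hgood : IsSimple (eraseVertex u i))
    (ha : 0 < det3 (u i) (u (i+1)) (u (i+2)) * det3 (u (i-1)) (u i) (u (i+1))) :
    0 < det3 (u (i-1)) (u (i+1)) (u (i+2)) * det3 (u (i-1)) (u i) (u (i+1)) := by
  haveI : NeZero n := ⟨by omega⟩
  have ne_i_i1 : i ≠ i + 1 := index_ne i (i+1) (c := 1) (by omega) (by omega) (by push_cast; ring)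
  have ne_im1_i : i - 1 ≠ i := index_ne (i-1) i (c := 1) (by omega) (by omega) (by push_cast; ring)
  have ne_im1_i1 : i - 1 ≠ i + 1 :=
    index_ne (i-1) (i+1) (c := 2) (by omega) (by omega) (by push_cast; ring)
  have ne_i_i2 : i ≠ i + 2 := index_ne i (i+2) (c := 2) (by omega) (by omega) (by push_cast; ring)
  have ne_i1_i2 : i + 1 ≠ i + 2 :=
    index_ne (i+1) (i+2) (c := 1) (by omega) (by omega) (by push_cast; ring)
  have ne_im1_i2 : i - 1 ≠ i + 2 :=
    index_ne (i-1) (i+2) (c := 3) (by omega) (by omega) (by push_cast; ring)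
  set q := u (i-1) with hq
  set r := u i with hr
  set s := u (i+1) with hs
  set t := u (i+2) with ht
  set d := det3 q r s with hd'
  have hd : d ≠ 0 := hgp (i-1) i (i+1) ne_im1_i ne_im1_i1 ne_i_i1
  by_contra hcon
  have hb2ne : det3 q s t * d ≠ 0 :=
    mul_ne_zero (hgp (i-1) (i+1) (i+2) ne_im1_i1 ne_im1_i2 ne_i1_i2) hd
  have hb2 : det3 q s t * d < 0 := by
    rcases hb2ne.lt_or_gt with h | h
    · exact h
    · exact absurd h hcon
  have hk1 : 0 < det3 t r s * d := by
    rw [show det3 t r s = det3 r s t from by rw [det3_cyclic r s t, det3_cyclic s t r]]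
    exact ha
  have hk2 : 0 < det3 q t s * d := by
    rw [det3_swap23_s12 q t s]
    nlinarith
  have hk3ne : det3 q r t * d ≠ 0 :=
    mul_ne_zero (hgp (i-1) i (i+2) ne_im1_i ne_im1_i2 ne_i_i2) hd
  rcases hk3ne.lt_or_gt with hk3 | hk3
  · -- z on edges [s,t] and [q,r]
    have key : (d*d) • t = (d * det3 t r s) • q + (d * det3 q t s) • r + (d * det3 q r t) • s := by
      rw [← smul_smul, cramer3_s12 q r s t, smul_add, smul_add, smul_smul, smul_smul, smul_smul]
    have h2 : (-(d * det3 q r t)) • s + (d*d) • t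
        = (d * det3 t r s) • q + (d * det3 q t s) • r := by
      rw [key, neg_smul]; abel
    have hdisj : Disjoint (sphericalEdge s t) (sphericalEdge q r) := by
      have hD := hsimple.1 (i+1) (i-1)
        ne_im1_i1
        (by rw [show i + 1 + 1 = i + 2 from by ring]; exact ne_im1_i2)
        (by rw [show i - 1 + 1 = i from by ring]; exact ne_i_i1.symm)
      unfold polyEdge at hD
      rw [show i + 1 + 1 = i + 2 from by ring, show i - 1 + 1 = i from by ring] at hD
      exact hD
    exact absurd hdisj (fun hD => not_disjoint_of_reps
      (z := (-(d * det3 q r t)) • s + (d*d) • t)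
      (by nlinarith) (mul_self_nonneg d) (Or.inr (mul_ne_zero hd hd))
      (by nlinarith) (by nlinarith) (Or.inl (by intro h0; rw [mul_comm] at h0; nlinarith))
      rfl h2 hD)
  · -- t in the cone: chain contradiction
    have e : i + 1 + ((1 : ℕ) : ZMod n) = i + 2 := by push_cast; ring
    exact chain_contra hn u hpoly hsimple hgp hbal i hgood 1 (le_refl _) (by omega)
      (by rw [e]; exact hk1) (by rw [e]; exact hk2) (by rw [e]; exact hk3)

end Fgeo

noncomputable section Count

lemma mul_neg_iff_ne {x y : ℝ} (hx : x ≠ 0) (hy : y ≠ 0) :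
    x * y < 0 ↔ ¬(0 < x ↔ 0 < y) := by
  rcases hx.lt_or_gt with h | h <;> rcases hy.lt_or_gt with h' | h'
  · simp [(mul_pos_of_neg_of_neg h h').asymm, h.not_gt, h'.not_gt]
  · simp [mul_neg_of_neg_of_pos h h', h.not_gt, h']
  · simp [mul_neg_of_pos_of_neg h h', h, h'.not_gt]
  · simp [(mul_pos h h').asymm, h, h']

lemma mul_pos_iff_ne {x y : ℝ} (hx : x ≠ 0) (hy : y ≠ 0) :
    0 < x * y ↔ (0 < x ↔ 0 < y) := by
  rcases hx.lt_or_gt with h | h <;> rcases hy.lt_or_gt with h' | h'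
  · simp [mul_pos_of_neg_of_neg h h', h.not_gt, h'.not_gt]
  · simp [(mul_neg_of_neg_of_pos h h').asymm, h.not_gt, h']
  · simp [(mul_neg_of_pos_of_neg h h').asymm, h, h'.not_gt]
  · simp [mul_pos h h', h, h']

lemma window_ineq (A a1 a2 a3 B b1 b2 : ℝ)
    (hA : A ≠ 0) (h1 : a1 ≠ 0) (h2 : a2 ≠ 0) (h3 : a3 ≠ 0) (hB : B ≠ 0)
    (hb1 : b1 ≠ 0) (hb2 : b2 ≠ 0)
    (F1 : 0 < a1 * a2 → 0 < b1 * a2) (F2 : 0 < a2 * a3 → 0 < b2 * a2) :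
    ((if A * b1 < 0 then 1 else 0) + (if b1 * b2 < 0 then 1 else 0)
        + (if b2 * B < 0 then 1 else 0) : ℕ) ≤
      (if A * a1 < 0 then 1 else 0) + (if a1 * a2 < 0 then 1 else 0)
        + (if a2 * a3 < 0 then 1 else 0) + (if a3 * B < 0 then 1 else 0) := by
  rw [mul_pos_iff_ne h1 h2, mul_pos_iff_ne hb1 h2] at F1
  rw [mul_pos_iff_ne h2 h3, mul_pos_iff_ne hb2 h2] at F2
  simp only [mul_neg_iff_ne hA hb1, mul_neg_iff_ne hb1 hb2, mul_neg_iff_ne hb2 hB,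
    mul_neg_iff_ne hA h1, mul_neg_iff_ne h1 h2, mul_neg_iff_ne h2 h3, mul_neg_iff_ne h3 hB]
  clear hA h1 h2 h3 hB hb1 hb2
  by_cases pA : 0 < A <;> by_cases p1 : 0 < a1 <;> by_cases p2 : 0 < a2 <;>
    by_cases p3 : 0 < a3 <;> by_cases pB : 0 < B <;> by_cases q1 : 0 < b1 <;>
    by_cases q2 : 0 < b2 <;>
    simp_all only [iff_true, iff_false, true_iff, false_iff, not_true, not_false_iff,
      not_not, if_true, if_false, ite_true, ite_false, forall_true_left, true_implies,
      false_implies, not_false_eq_true] <;> omega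

open Classical in
lemma ncard_inter_singleton {α : Type*} (S : Set α) (a : α) :
    (S ∩ {a}).ncard = if a ∈ S then 1 else 0 := by
  by_cases h : a ∈ S
  · rw [if_pos h]
    have : S ∩ {a} = {a} := by
      ext x; simp only [Set.mem_inter_iff, Set.mem_singleton_iff]
      constructor
      · tauto
      · rintro rfl; exact ⟨h, rfl⟩
    rw [this, Set.ncard_singleton]
  · rw [if_neg h]
    have : S ∩ {a} = ∅ := by
      ext x
      constructor
      · rintro ⟨hx, rfl⟩; exact absurd hx h
      · exact fun hx => absurd hx (Set.notMem_empty x)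
    rw [this, Set.ncard_empty]

open Classical in
lemma ncard_inter_insert {α : Type*} (S T : Set α) (a : α) (haT : a ∉ T) (hT : T.Finite) :
    (S ∩ insert a T).ncard = (if a ∈ S then 1 else 0) + (S ∩ T).ncard := by
  by_cases h : a ∈ S
  · rw [if_pos h]
    have he : S ∩ insert a T = insert a (S ∩ T) := by
      ext x
      simp only [Set.mem_inter_iff, Set.mem_insert_iff]
      constructor
      · rintro ⟨hx, rfl | hx2⟩
        · exact Or.inl rfl
        · exact Or.inr ⟨hx, hx2⟩
      · rintro (rfl | ⟨hx, hx2⟩)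
        · exact ⟨h, Or.inl rfl⟩
        · exact ⟨hx, Or.inr hx2⟩
    rw [he, Set.ncard_insert_of_notMem (by simp [haT]) (hT.inter_of_right S)]
    omega
  · rw [if_neg h]
    have he : S ∩ insert a T = S ∩ T := by
      ext x
      simp only [Set.mem_inter_iff, Set.mem_insert_iff]
      constructor
      · rintro ⟨hx, rfl | hx2⟩
        · exact absurd hx h
        · exact ⟨hx, hx2⟩
      · rintro ⟨hx, hx2⟩; exact ⟨hx, Or.inr hx2⟩
    rw [he]; omega

end Count

noncomputable section InflEval

lemma zmod_zero_cast (N : ℕ) : (0 : ZMod N) = ((0 : ℕ) : ZMod N) := by norm_num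

lemma infl_mid {n : ℕ} (hn : 5 ≤ n) (u : ZMod n → E3) (i : ZMod n) {c : ℕ}
    (h1 : 1 ≤ c) (h2 : c ≤ n-4) :
    Inflection (eraseVertex u i) ((c : ℕ) : ZMod (n-1)) ↔
      Inflection u (i + 1 + (c : ZMod n)) := by
  haveI : NeZero n := ⟨by omega⟩
  haveI : NeZero (n-1) := ⟨by omega⟩
  unfold Inflection
  have ec1 : ((c : ℕ) : ZMod (n-1)) - 1 = ((c-1 : ℕ) : ZMod (n-1)) := by
    rw [sub_eq_iff_eq_add, natCast_succ_zmod]; congr 1; omega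
  have ec2 : ((c : ℕ) : ZMod (n-1)) + 1 = ((c+1 : ℕ) : ZMod (n-1)) := natCast_succ_zmod c
  have ec3 : ((c : ℕ) : ZMod (n-1)) + 2 = ((c+2 : ℕ) : ZMod (n-1)) := by push_cast; ring
  rw [ec1, ec2, ec3, erase_eval u i (show c-1 < n-1 from by omega),
    erase_eval u i (show c < n-1 from by omega),
    erase_eval u i (show c+1 < n-1 from by omega),
    erase_eval u i (show c+2 < n-1 from by omega)]
  rw [show i + 1 + (c : ZMod n) - 1 = i + 1 + ((c-1 : ℕ) : ZMod n) from by
      rw [Nat.cast_sub h1]; push_cast; ring,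
    show i + 1 + (c : ZMod n) + 1 = i + 1 + ((c+1 : ℕ) : ZMod n) from by push_cast; ring,
    show i + 1 + (c : ZMod n) + 2 = i + 1 + ((c+2 : ℕ) : ZMod n) from by push_cast; ring]

lemma infl_erase_nm3 {n : ℕ} (hn : 5 ≤ n) (u : ZMod n → E3) (i : ZMod n) :
    Inflection (eraseVertex u i) ((n-3 : ℕ) : ZMod (n-1)) ↔
      det3 (u (i-3)) (u (i-2)) (u (i-1)) * det3 (u (i-2)) (u (i-1)) (u (i+1)) < 0 := by
  haveI : NeZero n := ⟨by omega⟩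
  haveI : NeZero (n-1) := ⟨by omega⟩
  unfold Inflection
  have ec1 : ((n-3 : ℕ) : ZMod (n-1)) - 1 = ((n-4 : ℕ) : ZMod (n-1)) := by
    rw [sub_eq_iff_eq_add, natCast_succ_zmod]; congr 1; omega
  have ec2 : ((n-3 : ℕ) : ZMod (n-1)) + 1 = ((n-2 : ℕ) : ZMod (n-1)) := by
    rw [natCast_succ_zmod]; congr 1; omega
  have ec3 : ((n-3 : ℕ) : ZMod (n-1)) + 2 = ((0 : ℕ) : ZMod (n-1)) := by
    rw [show ((n-3 : ℕ) : ZMod (n-1)) + 2 = (((n-3 : ℕ) : ZMod (n-1)) + 1) + 1 from by ring,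
      ec2, natCast_succ_zmod, show n-2+1 = n-1 from by omega, ZMod.natCast_self]
    norm_num
  rw [ec1, ec2, ec3, erase_eval u i (show n-4 < n-1 from by omega),
    erase_eval u i (show n-3 < n-1 from by omega),
    erase_eval u i (show n-2 < n-1 from by omega),
    erase_eval u i (show (0:ℕ) < n-1 from by omega)]
  rw [show i + 1 + ((n-4 : ℕ) : ZMod n) = i - 3 from by
      rw [natCast_sub_eq_neg (show 4 ≤ n from by omega)]; push_cast; ring,
    show i + 1 + ((n-3 : ℕ) : ZMod n) = i - 2 from by
      rw [natCast_sub_eq_neg (show 3 ≤ n from by omega)]; push_cast; ring,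
    show i + 1 + ((n-2 : ℕ) : ZMod n) = i - 1 from by
      rw [natCast_sub_eq_neg (show 2 ≤ n from by omega)]; push_cast; ring,
    show i + 1 + ((0 : ℕ) : ZMod n) = i + 1 from by push_cast; ring]

lemma infl_erase_nm2 {n : ℕ} (hn : 5 ≤ n) (u : ZMod n → E3) (i : ZMod n) :
    Inflection (eraseVertex u i) ((n-2 : ℕ) : ZMod (n-1)) ↔
      det3 (u (i-2)) (u (i-1)) (u (i+1)) * det3 (u (i-1)) (u (i+1)) (u (i+2)) < 0 := by
  haveI : NeZero n := ⟨by omega⟩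
  haveI : NeZero (n-1) := ⟨by omega⟩
  unfold Inflection
  have ec1 : ((n-2 : ℕ) : ZMod (n-1)) - 1 = ((n-3 : ℕ) : ZMod (n-1)) := by
    rw [sub_eq_iff_eq_add, natCast_succ_zmod]; congr 1; omega
  have ec2 : ((n-2 : ℕ) : ZMod (n-1)) + 1 = ((0 : ℕ) : ZMod (n-1)) := by
    rw [natCast_succ_zmod, show n-2+1 = n-1 from by omega, ZMod.natCast_self]
    norm_num
  have ec3 : ((n-2 : ℕ) : ZMod (n-1)) + 2 = ((1 : ℕ) : ZMod (n-1)) := by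
    rw [show ((n-2 : ℕ) : ZMod (n-1)) + 2 = (((n-2 : ℕ) : ZMod (n-1)) + 1) + 1 from by ring,
      ec2]
    push_cast; ring
  rw [ec1, ec2, ec3, erase_eval u i (show n-3 < n-1 from by omega),
    erase_eval u i (show n-2 < n-1 from by omega),
    erase_eval u i (show (0:ℕ) < n-1 from by omega),
    erase_eval u i (show (1:ℕ) < n-1 from by omega)]
  rw [show i + 1 + ((n-3 : ℕ) : ZMod n) = i - 2 from by
      rw [natCast_sub_eq_neg (show 3 ≤ n from by omega)]; push_cast; ring,
    show i + 1 + ((n-2 : ℕ) : ZMod n) = i - 1 from by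
      rw [natCast_sub_eq_neg (show 2 ≤ n from by omega)]; push_cast; ring,
    show i + 1 + ((0 : ℕ) : ZMod n) = i + 1 from by push_cast; ring,
    show i + 1 + ((1 : ℕ) : ZMod n) = i + 2 from by push_cast; ring]

lemma infl_erase_zero {n : ℕ} (hn : 5 ≤ n) (u : ZMod n → E3) (i : ZMod n) :
    Inflection (eraseVertex u i) ((0 : ℕ) : ZMod (n-1)) ↔
      det3 (u (i-1)) (u (i+1)) (u (i+2)) * det3 (u (i+1)) (u (i+2)) (u (i+3)) < 0 := by
  haveI : NeZero n := ⟨by omega⟩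
  haveI : NeZero (n-1) := ⟨by omega⟩
  unfold Inflection
  have ec1 : ((0 : ℕ) : ZMod (n-1)) - 1 = ((n-2 : ℕ) : ZMod (n-1)) := by
    rw [sub_eq_iff_eq_add, natCast_succ_zmod, show n-2+1 = n-1 from by omega,
      ZMod.natCast_self]
    norm_num
  have ec2 : ((0 : ℕ) : ZMod (n-1)) + 1 = ((1 : ℕ) : ZMod (n-1)) := by push_cast; ring
  have ec3 : ((0 : ℕ) : ZMod (n-1)) + 2 = ((2 : ℕ) : ZMod (n-1)) := by push_cast; ring
  rw [ec1, ec2, ec3, erase_eval u i (show n-2 < n-1 from by omega),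
    erase_eval u i (show (0:ℕ) < n-1 from by omega),
    erase_eval u i (show (1:ℕ) < n-1 from by omega),
    erase_eval u i (show (2:ℕ) < n-1 from by omega)]
  rw [show i + 1 + ((n-2 : ℕ) : ZMod n) = i - 1 from by
      rw [natCast_sub_eq_neg (show 2 ≤ n from by omega)]; push_cast; ring,
    show i + 1 + ((0 : ℕ) : ZMod n) = i + 1 from by push_cast; ring,
    show i + 1 + ((1 : ℕ) : ZMod n) = i + 2 from by push_cast; ring,
    show i + 1 + ((2 : ℕ) : ZMod n) = i + 3 from by push_cast; ring]

lemma infl_at {n : ℕ} (u : ZMod n → E3) (k : ZMod n) :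
    Inflection u k ↔ det3 (u (k-1)) (u k) (u (k+1)) * det3 (u k) (u (k+1)) (u (k+2)) < 0 :=
  Iff.rfl

end InflEval

/-- Deleting a good, nonessential vertex from a simple, balanced
spherical polygon with n ≥ 5 vertices in general position does not increase the
number of spherical inflections. -/
theorem stmt_12 {n : ℕ} (hn : 5 ≤ n) (u : ZMod n → E3)
    (hpoly : IsSphericalPolygon u)
    (hsimple : IsSimple u)
    (hgp : GeneralPosition u)
    (hbal : IsBalanced u)
    (i : ZMod n)
    (hgood : IsSimple (eraseVertex u i))
    (hness : IsBalanced (eraseVertex u i)) :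
    {j : ZMod (n - 1) | Inflection (eraseVertex u i) j}.ncard ≤
      {j : ZMod n | Inflection u j}.ncard := by
  classical
  haveI : NeZero n := ⟨by omega⟩
  haveI : NeZero (n-1) := ⟨by omega⟩
  -- index distinctness
  have n_im3_im2 : i-3 ≠ i-2 := index_ne _ _ (c:=1) (by omega) (by omega) (by push_cast; ring)
  have n_im3_im1 : i-3 ≠ i-1 := index_ne _ _ (c:=2) (by omega) (by omega) (by push_cast; ring)
  have n_im2_im1 : i-2 ≠ i-1 := index_ne _ _ (c:=1) (by omega) (by omega) (by push_cast; ring)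
  have n_im2_i : i-2 ≠ i := index_ne _ _ (c:=2) (by omega) (by omega) (by push_cast; ring)
  have n_im2_i1 : i-2 ≠ i+1 := index_ne _ _ (c:=3) (by omega) (by omega) (by push_cast; ring)
  have n_im1_i : i-1 ≠ i := index_ne _ _ (c:=1) (by omega) (by omega) (by push_cast; ring)
  have n_im1_i1 : i-1 ≠ i+1 := index_ne _ _ (c:=2) (by omega) (by omega) (by push_cast; ring)
  have n_im1_i2 : i-1 ≠ i+2 := index_ne _ _ (c:=3) (by omega) (by omega) (by push_cast; ring)
  have n_i_i1 : i ≠ i+1 := index_ne _ _ (c:=1) (by omega) (by omega) (by push_cast; ring)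
  have n_i_i2 : i ≠ i+2 := index_ne _ _ (c:=2) (by omega) (by omega) (by push_cast; ring)
  have n_i1_i2 : i+1 ≠ i+2 := index_ne _ _ (c:=1) (by omega) (by omega) (by push_cast; ring)
  have n_i1_i3 : i+1 ≠ i+3 := index_ne _ _ (c:=2) (by omega) (by omega) (by push_cast; ring)
  have n_i2_i3 : i+2 ≠ i+3 := index_ne _ _ (c:=1) (by omega) (by omega) (by push_cast; ring)
  set A := det3 (u (i-3)) (u (i-2)) (u (i-1)) with hA'
  set a1 := det3 (u (i-2)) (u (i-1)) (u i) with ha1'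
  set a2 := det3 (u (i-1)) (u i) (u (i+1)) with ha2'
  set a3 := det3 (u i) (u (i+1)) (u (i+2)) with ha3'
  set B := det3 (u (i+1)) (u (i+2)) (u (i+3)) with hB'
  set b1 := det3 (u (i-2)) (u (i-1)) (u (i+1)) with hb1'
  set b2 := det3 (u (i-1)) (u (i+1)) (u (i+2)) with hb2'
  have hA0 : A ≠ 0 := hgp (i-3) (i-2) (i-1) n_im3_im2 n_im3_im1 n_im2_im1
  have ha10 : a1 ≠ 0 := hgp (i-2) (i-1) i n_im2_im1 n_im2_i n_im1_i
  have ha20 : a2 ≠ 0 := hgp (i-1) i (i+1) n_im1_i n_im1_i1 n_i_i1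
  have ha30 : a3 ≠ 0 := hgp i (i+1) (i+2) n_i_i1 n_i_i2 n_i1_i2
  have hB0 : B ≠ 0 := hgp (i+1) (i+2) (i+3) n_i1_i2 n_i1_i3 n_i2_i3
  have hb10 : b1 ≠ 0 := hgp (i-2) (i-1) (i+1) n_im2_im1 n_im2_i1 n_im1_i1
  have hb20 : b2 ≠ 0 := hgp (i-1) (i+1) (i+2) n_im1_i1 n_im1_i2 n_i1_i2
  -- window inflection characterizations for Q
  have wq1 : Inflection u (i-2) ↔ A * a1 < 0 := by
    unfold Inflection
    rw [show i-2-1 = i-3 from by ring, show i-2+1 = i-1 from by ring,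
      show i-2+2 = i from by ring]
  have wq2 : Inflection u (i-1) ↔ a1 * a2 < 0 := by
    unfold Inflection
    rw [show i-1-1 = i-2 from by ring, show i-1+1 = i from by ring,
      show i-1+2 = i+1 from by ring]
  have wq3 : Inflection u i ↔ a2 * a3 < 0 := Iff.rfl
  have wq4 : Inflection u (i+1) ↔ a3 * B < 0 := by
    unfold Inflection
    rw [show i+1-1 = i from by ring, show i+1+1 = i+2 from by ring,
      show i+1+2 = i+3 from by ring]
  -- sets
  set S' : Set (ZMod (n-1)) := {j : ZMod (n-1) | Inflection (eraseVertex u i) j} with hS'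
  set S : Set (ZMod n) := {j : ZMod n | Inflection u j} with hS
  set W' : Set (ZMod (n-1)) :=
    insert ((0:ℕ) : ZMod (n-1)) (insert ((n-3:ℕ) : ZMod (n-1)) {((n-2:ℕ) : ZMod (n-1))}) with hW'
  set W : Set (ZMod n) := insert (i-2) (insert (i-1) (insert i {i+1})) with hW
  have mS' : ∀ j, j ∈ S' ↔ Inflection (eraseVertex u i) j := fun j => Iff.rfl
  have mS : ∀ k, k ∈ S ↔ Inflection u k := fun k => Iff.rfl
  have hW'mem : ∀ j, j ∈ W' ↔ (j = ((0:ℕ) : ZMod (n-1)) ∨ j = ((n-3:ℕ) : ZMod (n-1)) ∨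
      j = ((n-2:ℕ) : ZMod (n-1))) := by
    intro j; rw [hW']; simp [Set.mem_insert_iff, Set.mem_singleton_iff]
  have hWmem : ∀ k, k ∈ W ↔ (k = i-2 ∨ k = i-1 ∨ k = i ∨ k = i+1) := by
    intro k; rw [hW]; simp [Set.mem_insert_iff, Set.mem_singleton_iff]
  have hsplit' : (S' ∩ W').ncard + (S' \ W').ncard = S'.ncard :=
    Set.ncard_inter_add_ncard_diff_eq_ncard S' W' (Set.toFinite S')
  have hsplit : (S ∩ W).ncard + (S \ W).ncard = S.ncard :=
    Set.ncard_inter_add_ncard_diff_eq_ncard S W (Set.toFinite S)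
  -- off-window bijection
  set g : ZMod (n-1) → ZMod n := fun j => i + 1 + ((j.val : ℕ) : ZMod n) with hg
  have hval_roundtrip : ∀ j : ZMod (n-1), ((j.val : ℕ) : ZMod (n-1)) = j := fun j => by
    rw [ZMod.natCast_val, ZMod.cast_id]
  have hoff_val : ∀ j : ZMod (n-1), j ∉ W' → 1 ≤ j.val ∧ j.val ≤ n-4 := by
    intro j hj
    have hlt : j.val < n-1 := ZMod.val_lt j
    have hj0 : j.val ≠ 0 := by
      intro h
      exact hj ((hW'mem j).mpr (Or.inl (by rw [← hval_roundtrip j]; congr 1)))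
    have hj3 : j.val ≠ n-3 := by
      intro h
      exact hj ((hW'mem j).mpr (Or.inr (Or.inl (by rw [← hval_roundtrip j]; congr 1))))
    have hj2 : j.val ≠ n-2 := by
      intro h
      exact hj ((hW'mem j).mpr (Or.inr (Or.inr (by rw [← hval_roundtrip j]; congr 1))))
    omega
  have himg : g '' (S' \ W') = S \ W := by
    ext k
    constructor
    · rintro ⟨j, ⟨hjS, hjW⟩, rfl⟩
      obtain ⟨hc1, hc2⟩ := hoff_val j hjW
      have hinfl : Inflection u (g j) := by
        have h' := infl_mid hn u i hc1 hc2
        rw [hval_roundtrip j] at h'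
        exact h'.mp ((mS' j).mp hjS)
      refine ⟨(mS _).mpr hinfl, ?_⟩
      rw [hWmem]
      push_neg
      refine ⟨?_, ?_, ?_, ?_⟩
      · exact index_ne' _ _ (c := j.val+3) (by omega) (by omega) (by push_cast; ring)
      · exact index_ne' _ _ (c := j.val+2) (by omega) (by omega) (by push_cast; ring)
      · exact index_ne' _ _ (c := j.val+1) (by omega) (by omega) (by push_cast; ring)
      · exact index_ne' _ _ (c := j.val) (by omega) (by omega) (by push_cast; ring)
    · rintro ⟨hkS, hkW⟩
      set c := (k - (i+1)).val with hc'
      have hkc : k = i + 1 + (c : ZMod n) := by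
        rw [hc', ZMod.natCast_val, ZMod.cast_id]; ring
      have hclt : c < n := ZMod.val_lt _
      rw [hWmem] at hkW
      push_neg at hkW
      obtain ⟨w1, w2, w3, w4⟩ := hkW
      have hc1 : 1 ≤ c := by
        by_contra h
        exact w4 (by rw [hkc, show c = 0 from by omega]; push_cast; ring)
      have hcn4 : c ≤ n-4 := by
        by_contra h
        have : c = n-3 ∨ c = n-2 ∨ c = n-1 := by omega
        rcases this with h' | h' | h'
        · exact w1 (by rw [hkc, h', natCast_sub_eq_neg (show 3 ≤ n from by omega)]
                       push_cast; ring)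
        · exact w2 (by rw [hkc, h', natCast_sub_eq_neg (show 2 ≤ n from by omega)]
                       push_cast; ring)
        · exact w3 (by rw [hkc, h', natCast_sub_eq_neg (show 1 ≤ n from by omega)]
                       push_cast; ring)
      refine ⟨((c : ℕ) : ZMod (n-1)), ⟨?_, ?_⟩, ?_⟩
      · exact (mS' _).mpr ((infl_mid hn u i hc1 hcn4).mpr (by rw [← hkc]; exact (mS k).mp hkS))
      · intro hmem
        rw [hW'mem] at hmem
        have hvv : ((c : ℕ) : ZMod (n-1)).val = c := ZMod.val_cast_of_lt (by omega)
        rcases hmem with h' | h' | h' <;>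
          · rw [h'] at hvv
            rw [ZMod.val_cast_of_lt (by omega)] at hvv
            omega
      · show i + 1 + ((((c : ℕ) : ZMod (n-1)).val : ℕ) : ZMod n) = k
        rw [ZMod.val_cast_of_lt (show c < n-1 from by omega), ← hkc]
  have hinj : Set.InjOn g (S' \ W') := by
    intro j hj j' hj' he
    have h1 : ((j.val : ℕ) : ZMod n) = ((j'.val : ℕ) : ZMod n) := add_left_cancel he
    have h2 : j.val = j'.val := by
      have := congrArg ZMod.val h1
      rwa [ZMod.val_cast_of_lt (lt_of_lt_of_le (ZMod.val_lt j) (by omega)),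
        ZMod.val_cast_of_lt (lt_of_lt_of_le (ZMod.val_lt j') (by omega))] at this
    rw [← hval_roundtrip j, ← hval_roundtrip j', h2]
  have hoff_eq : (S' \ W').ncard = (S \ W).ncard := by
    rw [← himg, Set.ncard_image_of_injOn hinj]
  -- window cardinalities
  have hd0 : ((0:ℕ) : ZMod (n-1)) ≠ ((n-3:ℕ) : ZMod (n-1)) :=
    natCast_ne_natCast (by omega) (by omega) (by omega)
  have hd1 : ((0:ℕ) : ZMod (n-1)) ≠ ((n-2:ℕ) : ZMod (n-1)) :=
    natCast_ne_natCast (by omega) (by omega) (by omega)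
  have hd2 : ((n-3:ℕ) : ZMod (n-1)) ≠ ((n-2:ℕ) : ZMod (n-1)) :=
    natCast_ne_natCast (by omega) (by omega) (by omega)
  have hcardW' : (S' ∩ W').ncard = (if ((0:ℕ) : ZMod (n-1)) ∈ S' then 1 else 0)
      + ((if ((n-3:ℕ) : ZMod (n-1)) ∈ S' then 1 else 0)
      + (if ((n-2:ℕ) : ZMod (n-1)) ∈ S' then 1 else 0)) := by
    rw [hW', ncard_inter_insert S' _ _ (by
        simp only [Set.mem_insert_iff, Set.mem_singleton_iff]
        push_neg
        exact ⟨hd0, hd1⟩) (Set.toFinite _),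
      ncard_inter_insert S' _ _ (by
        simp only [Set.mem_singleton_iff]
        exact hd2) (Set.toFinite _),
      ncard_inter_singleton]
  have hcardW : (S ∩ W).ncard = (if i-2 ∈ S then 1 else 0) + ((if i-1 ∈ S then 1 else 0)
      + ((if i ∈ S then 1 else 0) + (if i+1 ∈ S then 1 else 0))) := by
    rw [hW, ncard_inter_insert S _ _ (by
        simp only [Set.mem_insert_iff, Set.mem_singleton_iff]
        push_neg
        exact ⟨n_im2_im1, n_im2_i, n_im2_i1⟩) (Set.toFinite _),
      ncard_inter_insert S _ _ (by
        simp only [Set.mem_insert_iff, Set.mem_singleton_iff]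
        push_neg
        exact ⟨n_im1_i, n_im1_i1⟩) (Set.toFinite _),
      ncard_inter_insert S _ _ (by
        simp only [Set.mem_singleton_iff]
        exact n_i_i1) (Set.toFinite _),
      ncard_inter_singleton]
  have hwin : (S' ∩ W').ncard ≤ (S ∩ W).ncard := by
    rw [hcardW, hcardW']
    have e0 : (((0:ℕ) : ZMod (n-1)) ∈ S') ↔ (b2 * B < 0) :=
      (mS' _).trans (infl_erase_zero hn u i)
    have e3 : (((n-3:ℕ) : ZMod (n-1)) ∈ S') ↔ (A * b1 < 0) :=
      (mS' _).trans (infl_erase_nm3 hn u i)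
    have e2 : (((n-2:ℕ) : ZMod (n-1)) ∈ S') ↔ (b1 * b2 < 0) :=
      (mS' _).trans (infl_erase_nm2 hn u i)
    have f1 : (i-2 ∈ S) ↔ (A * a1 < 0) := (mS _).trans wq1
    have f2 : (i-1 ∈ S) ↔ (a1 * a2 < 0) := (mS _).trans wq2
    have f3 : (i ∈ S) ↔ (a2 * a3 < 0) := (mS _).trans wq3
    have f4 : (i+1 ∈ S) ↔ (a3 * B < 0) := (mS _).trans wq4
    simp only [e0, e3, e2, f1, f2, f3, f4]
    have key := window_ineq A a1 a2 a3 B b1 b2 hA0 ha10 ha20 ha30 hB0 hb10 hb20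
      (fun h => F1_geo hn u hpoly hsimple hgp hbal i hgood h)
      (fun h => F2_geo hn u hpoly hsimple hgp hbal i hgood (by rw [mul_comm] at h; exact h))
    omega
  calc S'.ncard = (S' ∩ W').ncard + (S' \ W').ncard := hsplit'.symm
    _ ≤ (S ∩ W).ncard + (S \ W).ncard := Nat.add_le_add hwin (le_of_eq hoff_eq)
    _ = S.ncard := hsplit
end

section
/- Let Q = [u₁,u₂,u₃,u₄] be a spherical polygon with 4 vertices such that every three of the vertices are linearly independent. Then: (i) the vertices are balanced (not contained in any closed hemisphere) if and only if every index i ∈ {1,2,3,4} (mod 4) is a spherical inflection of Q; and (ii) if the vertices are balanced, then Q is simple. -/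
open scoped RealInnerProductSpace

private lemma li_combo {x y z : E3} (h : LinearIndependent ℝ ![x,y,z]) {p q r : ℝ}
    (hz : p•x+q•y+r•z = 0) : p = 0 ∧ q = 0 ∧ r = 0 := by
  have h' := Fintype.linearIndependent_iff.mp h ![p,q,r]
  have hs : ∑ i, (![p,q,r]) i • (![x,y,z]) i = 0 := by
    simpa [Fin.sum_univ_three] using hz
  exact ⟨h' hs 0, h' hs 1, h' hs 2⟩

private lemma repr3 {x y z : E3} (h : LinearIndependent ℝ ![x,y,z]) (v : E3) :
    ∃ p q r : ℝ, v = p•x+q•y+r•z := by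
  have hcard : Fintype.card (Fin 3) = Module.finrank ℝ E3 := by
    simp [finrank_euclideanSpace_fin]
  have hsp := h.span_eq_top_of_card_eq_finrank hcard
  have hv : v ∈ Submodule.span ℝ (Set.range ![x,y,z]) := by rw [hsp]; trivial
  obtain ⟨c, hc⟩ := (Submodule.mem_span_range_iff_exists_fun ℝ).mp hv
  exact ⟨c 0, c 1, c 2, by rw [← hc]; simp [Fin.sum_univ_three]⟩

private lemma det3_ne_zero {x y z : E3} (h : LinearIndependent ℝ ![x,y,z]) :
    det3 x y z ≠ 0 := by
  intro h0
  set M : Matrix (Fin 3) (Fin 3) ℝ :=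
    Matrix.of ![(fun j => x j), (fun j => y j), (fun j => z j)] with hM
  have hdet : M.det = 0 := by
    rw [Matrix.det_fin_three]
    simp [det3, Matrix.det_fin_three] at h0 ⊢
    simp [hM]
    linarith [h0]
  obtain ⟨v, hv, hvM⟩ := (Matrix.exists_vecMul_eq_zero_iff).mpr hdet
  have hcomb : v 0 • x + v 1 • y + v 2 • z = 0 := by
    ext j
    have := congrFun hvM j
    simp [Matrix.vecMul, dotProduct, Fin.sum_univ_three, hM] at this
    simp [PiLp.add_apply, PiLp.smul_apply, smul_eq_mul]
    fin_cases j <;> simpa using this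
  obtain ⟨h1,h2,h3⟩ := li_combo h hcomb
  exact hv (by funext i; fin_cases i <;> assumption)

private lemma eq_scaled {V W : E3} (hV : V ≠ 0) (hW : W ≠ 0)
    (h : ‖V‖⁻¹ • V = ‖W‖⁻¹ • W) : ∃ μ : ℝ, 0 < μ ∧ V = μ • W := by
  have hVn : ‖V‖ ≠ 0 := norm_ne_zero_iff.mpr hV
  have hWn : (0:ℝ) < ‖W‖ := norm_pos_iff.mpr hW
  refine ⟨‖V‖ * ‖W‖⁻¹, by positivity, ?_⟩
  calc V = ‖V‖ • (‖V‖⁻¹ • V) := by rw [smul_inv_smul₀ hVn]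
  _ = ‖V‖ • (‖W‖⁻¹ • W) := by rw [h]
  _ = (‖V‖ * ‖W‖⁻¹) • W := by rw [smul_smul]

private lemma cross_exists (x y : E3) :
    ∃ w : E3, ⟪x, w⟫ = 0 ∧ ⟪y, w⟫ = 0 ∧ ∀ v : E3, ⟪v, w⟫ = det3 v x y := by
  refine ⟨(WithLp.equiv 2 (Fin 3 → ℝ)).symm
    ![x 1*y 2 - x 2*y 1, x 2*y 0 - x 0*y 2, x 0*y 1 - x 1*y 0], ?_, ?_, fun v => ?_⟩ <;>
  · simp [PiLp.inner_apply, RCLike.inner_apply, Fin.sum_univ_three, det3,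
      Matrix.det_fin_three, WithLp.equiv_symm_apply, PiLp.toLp_apply]
    ring

private lemma bal_neg_coeff {u : ZMod 4 → E3} (hbal : IsBalanced u) {w : E3} {D θ : ℝ}
    (hD : D ≠ 0) {i0 i1 i2 : ZMod 4}
    (h0 : ⟪u i0, w⟫ = 0) (h1 : ⟪u i1, w⟫ = 0) (h2 : ⟪u i2, w⟫ = D)
    (h3 : ⟪u 3, w⟫ = θ*D)
    (hcover : ∀ i : ZMod 4, i = i0 ∨ i = i1 ∨ i = i2 ∨ i = 3) : θ < 0 := by
  by_contra hge; push_neg at hge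
  have hwne : w ≠ 0 := by intro h0'; exact hD (by rw [← h2, h0', inner_zero_right])
  have hw'ne : D • w ≠ 0 := smul_ne_zero hD hwne
  obtain ⟨i, hi⟩ := hbal (D • w) hw'ne
  rw [real_inner_smul_right] at hi
  rcases hcover i with rfl|rfl|rfl|rfl
  · rw [h0] at hi; simp at hi
  · rw [h1] at hi; simp at hi
  · rw [h2] at hi; nlinarith [mul_self_nonneg D]
  · rw [h3] at hi; nlinarith [mul_nonneg hge (mul_self_nonneg D)]

private lemma adjacent_edges {x y z : E3} (h : LinearIndependent ℝ ![x,y,z])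
    (hy : ‖y‖ = 1) : sphericalEdge x y ∩ sphericalEdge y z = {y} := by
  ext v
  simp only [Set.mem_inter_iff, Set.mem_singleton_iff, sphericalEdge, Set.mem_setOf_eq]
  constructor
  · rintro ⟨⟨s,t,hs,ht,hst,rfl⟩, ⟨p,q,hp,hq,hpq,hv2⟩⟩
    have hV : s•x+t•y ≠ 0 := by
      intro h0
      have h0' : s•x+t•y+(0:ℝ)•z = 0 := by rw [zero_smul, add_zero]; exact h0
      obtain ⟨e1,e2,-⟩ := li_combo h h0'
      rcases hst with h'|h' <;> [exact h' e1; exact h' e2]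
    have hW : p•y+q•z ≠ 0 := by
      intro h0
      have h0' : (0:ℝ)•x+p•y+q•z = 0 := by rw [zero_smul, zero_add]; exact h0
      obtain ⟨-,e2,e3⟩ := li_combo h h0'
      rcases hpq with h'|h' <;> [exact h' e2; exact h' e3]
    obtain ⟨μ,hμ,hVW⟩ := eq_scaled hV hW hv2
    have hcomb : s•x + (t-μ*p)•y + (-(μ*q))•z = 0 := by
      linear_combination (norm := module) hVW
    obtain ⟨e1,e2,e3⟩ := li_combo h hcomb
    have hq0 : q = 0 := by
      rcases mul_eq_zero.mp (neg_eq_zero.mp e3) with h'|h'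
      · exact absurd h' hμ.ne'
      · exact h'
    have ht' : 0 < t := by
      rcases hst with h'|h'
      · exact absurd e1 h'
      · exact lt_of_le_of_ne ht (Ne.symm h')
    rw [e1, zero_smul, zero_add, norm_smul, hy, Real.norm_eq_abs, abs_of_pos ht',
      mul_one, smul_smul, inv_mul_cancel₀ ht'.ne', one_smul]
  · rintro rfl
    refine ⟨⟨0, 1, le_refl 0, zero_le_one, Or.inr one_ne_zero, ?_⟩,
      ⟨1, 0, zero_le_one, le_refl 0, Or.inl one_ne_zero, ?_⟩⟩ <;>
      simp [norm_smul, hy]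

set_option maxHeartbeats 2000000 in
/-- For a spherical polygon with 4 vertices, every three of which are
linearly independent: (i) the vertices are balanced iff every index is a spherical
inflection; (ii) if the vertices are balanced then the polygon is simple. -/
theorem stmt_17 (u : ZMod 4 → E3)
    (hpoly : IsSphericalPolygon u)
    (hind : ∀ i j k : ZMod 4, i ≠ j → i ≠ k → j ≠ k →
      LinearIndependent ℝ ![u i, u j, u k]) :
    (IsBalanced u ↔ ∀ i : ZMod 4, Inflection u i) ∧
    (IsBalanced u → IsSimple u) := by
  obtain ⟨hnorm, hinj, hnap⟩ := hpoly
  have h4 : ∀ i : ZMod 4, i = 0 ∨ i = 1 ∨ i = 2 ∨ i = 3 := by decide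
  have h012 := hind 0 1 2 (by decide) (by decide) (by decide)
  have h123 := hind 1 2 3 (by decide) (by decide) (by decide)
  have h230 := hind 2 3 0 (by decide) (by decide) (by decide)
  have h301 := hind 3 0 1 (by decide) (by decide) (by decide)
  obtain ⟨a, b, c, hu3⟩ := repr3 h012 (u 3)
  have hD : det3 (u 0) (u 1) (u 2) ≠ 0 := det3_ne_zero h012
  have h3j : ∀ j, u 3 j = a * u 0 j + b * u 1 j + c * u 2 j := by
    intro j; rw [hu3]; simp [PiLp.add_apply, PiLp.smul_apply, smul_eq_mul]
  have hd1 : det3 (u 1) (u 2) (u 3) = a * det3 (u 0) (u 1) (u 2) := by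
    simp [det3, Matrix.det_fin_three, h3j]; ring
  have hd2 : det3 (u 2) (u 3) (u 0) = -(b * det3 (u 0) (u 1) (u 2)) := by
    simp [det3, Matrix.det_fin_three, h3j]; ring
  have hd3 : det3 (u 3) (u 0) (u 1) = c * det3 (u 0) (u 1) (u 2) := by
    simp [det3, Matrix.det_fin_three, h3j]; ring
  -- balanced implies negative coefficients
  have neg_of_bal : IsBalanced u → a < 0 ∧ b < 0 ∧ c < 0 := by
    intro hbal
    refine ⟨?_, ?_, ?_⟩
    · obtain ⟨w, hwx, hwy, hwv⟩ := cross_exists (u 1) (u 2)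
      have e2 : ⟪u 0, w⟫ = det3 (u 0) (u 1) (u 2) := hwv (u 0)
      have e3 : ⟪u 3, w⟫ = a * det3 (u 0) (u 1) (u 2) := by
        rw [hwv (u 3)]; simp [det3, Matrix.det_fin_three, h3j]; ring
      exact bal_neg_coeff hbal hD hwx hwy e2 e3 (by decide)
    · obtain ⟨w, hwx, hwy, hwv⟩ := cross_exists (u 2) (u 0)
      have e2 : ⟪u 1, w⟫ = det3 (u 0) (u 1) (u 2) := by
        rw [hwv (u 1)]; simp [det3, Matrix.det_fin_three]; ring
      have e3 : ⟪u 3, w⟫ = b * det3 (u 0) (u 1) (u 2) := by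
        rw [hwv (u 3)]; simp [det3, Matrix.det_fin_three, h3j]; ring
      exact bal_neg_coeff hbal hD hwx hwy e2 e3 (by decide)
    · obtain ⟨w, hwx, hwy, hwv⟩ := cross_exists (u 0) (u 1)
      have e2 : ⟪u 2, w⟫ = det3 (u 0) (u 1) (u 2) := by
        rw [hwv (u 2)]; simp [det3, Matrix.det_fin_three]; ring
      have e3 : ⟪u 3, w⟫ = c * det3 (u 0) (u 1) (u 2) := by
        rw [hwv (u 3)]; exact hd3
      exact bal_neg_coeff hbal hD hwx hwy e2 e3 (by decide)
  -- negative coefficients imply balanced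
  have bal_of_neg : a < 0 → b < 0 → c < 0 → IsBalanced u := by
    intro ha hb hc w hw
    by_contra hcon; push_neg at hcon
    have t0 := hcon 0; have t1 := hcon 1; have t2 := hcon 2; have t3 := hcon 3
    have hin3 : ⟪u 3, w⟫ = a*⟪u 0,w⟫+b*⟪u 1,w⟫+c*⟪u 2,w⟫ := by
      rw [hu3, inner_add_left, inner_add_left, real_inner_smul_left,
        real_inner_smul_left, real_inner_smul_left]
    rw [hin3] at t3
    have ha0 : a * ⟪u 0, w⟫ ≤ 0 := by nlinarith
    have hb0 : b * ⟪u 1, w⟫ ≤ 0 := by nlinarith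
    have hc0 : c * ⟪u 2, w⟫ ≤ 0 := by nlinarith
    have hx0 : ⟪u 0, w⟫ = 0 := by
      rcases mul_eq_zero.mp (le_antisymm ha0 (by linarith)) with h'|h'
      · exact absurd h' ha.ne
      · exact h'
    have hx1 : ⟪u 1, w⟫ = 0 := by
      rcases mul_eq_zero.mp (le_antisymm hb0 (by linarith)) with h'|h'
      · exact absurd h' hb.ne
      · exact h'
    have hx2 : ⟪u 2, w⟫ = 0 := by
      rcases mul_eq_zero.mp (le_antisymm hc0 (by linarith)) with h'|h'
      · exact absurd h' hc.ne
      · exact h'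
    obtain ⟨p, q, r, hwrep⟩ := repr3 h012 w
    have hww : ⟪w, w⟫ = 0 := by
      nth_rewrite 1 [hwrep]
      rw [inner_add_left, inner_add_left, real_inner_smul_left,
        real_inner_smul_left, real_inner_smul_left, hx0, hx1, hx2]
      ring
    exact hw (inner_self_eq_zero.mp hww)
  constructor
  · constructor
    · intro hbal i
      obtain ⟨ha, hb, hc⟩ := neg_of_bal hbal
      rcases h4 i with rfl|rfl|rfl|rfl
      · show det3 (u 3) (u 0) (u 1) * det3 (u 0) (u 1) (u 2) < 0
        rw [hd3]; nlinarith [sq_pos_of_ne_zero hD]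
      · show det3 (u 0) (u 1) (u 2) * det3 (u 1) (u 2) (u 3) < 0
        rw [hd1]; nlinarith [sq_pos_of_ne_zero hD]
      · show det3 (u 1) (u 2) (u 3) * det3 (u 2) (u 3) (u 0) < 0
        rw [hd1, hd2]
        nlinarith [mul_pos (mul_pos (neg_pos.mpr ha) (neg_pos.mpr hb)) (sq_pos_of_ne_zero hD)]
      · show det3 (u 2) (u 3) (u 0) * det3 (u 3) (u 0) (u 1) < 0
        rw [hd2, hd3]
        nlinarith [mul_pos (mul_pos (neg_pos.mpr hb) (neg_pos.mpr hc)) (sq_pos_of_ne_zero hD)]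
    · intro hinf
      have hDsq : 0 < det3 (u 0) (u 1) (u 2) ^ 2 := sq_pos_of_ne_zero hD
      have h1 : det3 (u 0) (u 1) (u 2) * det3 (u 1) (u 2) (u 3) < 0 := hinf 1
      have h0' : det3 (u 3) (u 0) (u 1) * det3 (u 0) (u 1) (u 2) < 0 := hinf 0
      have h2 : det3 (u 1) (u 2) (u 3) * det3 (u 2) (u 3) (u 0) < 0 := hinf 2
      rw [hd1] at h1 h2
      rw [hd2] at h2
      rw [hd3] at h0'
      have ha : a < 0 := by nlinarith
      have hc : c < 0 := by nlinarith
      have hb : b < 0 := by nlinarith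
      exact bal_of_neg ha hb hc
  · intro hbal
    obtain ⟨ha, hb, hc⟩ := neg_of_bal hbal
    have d02 : Disjoint (polyEdge u 0) (polyEdge u 2) := by
      rw [Set.disjoint_left]
      rintro v ⟨s,t,hs,ht,hst,rfl⟩ ⟨p,q,hp,hq,hpq,hv2⟩
      have hV : s•u 0+t•u 1 ≠ 0 := by
        intro h0
        have h0' : s•u 0+t•u 1+(0:ℝ)•u 2 = 0 := by rw [zero_smul, add_zero]; exact h0
        obtain ⟨e1,e2,-⟩ := li_combo h012 h0'
        rcases hst with h'|h' <;> [exact h' e1; exact h' e2]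
      have hW : p•u 2+q•u 3 ≠ 0 := by
        intro h0
        have h0' : p•u 2+q•u 3+(0:ℝ)•u 0 = 0 := by rw [zero_smul, add_zero]; exact h0
        obtain ⟨e1,e2,-⟩ := li_combo h230 h0'
        rcases hpq with h'|h' <;> [exact h' e1; exact h' e2]
      obtain ⟨μ,hμ,hVW⟩ := eq_scaled hV hW hv2
      rw [hu3] at hVW
      have hcomb : (s - μ*(q*a))•u 0 + (t - μ*(q*b))•u 1 + (-(μ*p) - μ*(q*c))•u 2 = 0 := by
        linear_combination (norm := module) hVW
      obtain ⟨e1,e2,e3⟩ := li_combo h012 hcomb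
      have hqa : μ*(q*a) ≤ 0 := by nlinarith [mul_nonneg hμ.le hq]
      have hs0 : s = 0 := le_antisymm (by linarith) hs
      have hq0 : q = 0 := by
        have hz : μ*(q*a) = 0 := by linarith
        rcases mul_eq_zero.mp hz with h'|h'
        · exact absurd h' hμ.ne'
        · rcases mul_eq_zero.mp h' with h''|h''
          · exact h''
          · exact absurd h'' ha.ne
      have hp0 : p = 0 := by
        rw [hq0] at e3
        have hz : μ*p = 0 := by linear_combination -e3
        rcases mul_eq_zero.mp hz with h'|h'
        · exact absurd h' hμ.ne'
        · exact h'
      rcases hpq with h'|h' <;> [exact h' hp0; exact h' hq0]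
    have d13 : Disjoint (polyEdge u 1) (polyEdge u 3) := by
      rw [Set.disjoint_left]
      rintro v ⟨s,t,hs,ht,hst,rfl⟩ ⟨p,q,hp,hq,hpq,hv2⟩
      have hV : s•u 1+t•u 2 ≠ 0 := by
        intro h0
        have h0' : s•u 1+t•u 2+(0:ℝ)•u 3 = 0 := by rw [zero_smul, add_zero]; exact h0
        obtain ⟨e1,e2,-⟩ := li_combo h123 h0'
        rcases hst with h'|h' <;> [exact h' e1; exact h' e2]
      have hW : p•u 3+q•u 0 ≠ 0 := by
        intro h0
        have h0' : p•u 3+q•u 0+(0:ℝ)•u 1 = 0 := by rw [zero_smul, add_zero]; exact h0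
        obtain ⟨e1,e2,-⟩ := li_combo h301 h0'
        rcases hpq with h'|h' <;> [exact h' e1; exact h' e2]
      obtain ⟨μ,hμ,hVW⟩ := eq_scaled hV hW hv2
      rw [hu3] at hVW
      have hcomb : (-(μ*(p*a)) - μ*q)•u 0 + (s - μ*(p*b))•u 1 + (t - μ*(p*c))•u 2 = 0 := by
        linear_combination (norm := module) hVW
      obtain ⟨e1,e2,e3⟩ := li_combo h012 hcomb
      have hpb : μ*(p*b) ≤ 0 := by nlinarith [mul_nonneg hμ.le hp]
      have hs0 : s = 0 := le_antisymm (by linarith) hs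
      have hp0 : p = 0 := by
        have hz : μ*(p*b) = 0 := by linarith
        rcases mul_eq_zero.mp hz with h'|h'
        · exact absurd h' hμ.ne'
        · rcases mul_eq_zero.mp h' with h''|h''
          · exact h''
          · exact absurd h'' hb.ne
      have hq0 : q = 0 := by
        rw [hp0] at e1
        have hz : μ*q = 0 := by linear_combination -e1
        rcases mul_eq_zero.mp hz with h'|h'
        · exact absurd h' hμ.ne'
        · exact h'
      rcases hpq with h'|h' <;> [exact h' hp0; exact h' hq0]
    constructor
    · intro i j hj1 hj2 hj3
      have hkey : ∀ i j : ZMod 4, j ≠ i → j ≠ i+1 → i ≠ j+1 → j = i+2 := by decide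
      have hj : j = i + 2 := hkey i j hj1 hj2 hj3
      subst hj
      rcases h4 i with rfl|rfl|rfl|rfl
      · exact d02
      · exact d13
      · exact d02.symm
      · exact d13.symm
    · intro i
      rcases h4 i with rfl|rfl|rfl|rfl
      · exact adjacent_edges h012 (hnorm 1)
      · exact adjacent_edges h123 (hnorm 2)
      · exact adjacent_edges h230 (hnorm 3)
      · exact adjacent_edges h301 (hnorm 0)
end
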